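/- arXiv:0912.1018 — 5 statements merged into one kernel-verified Lean document; each statement's English description precedes it below -/
import Mathlib

section
/- For any scalars β_1, …, β_m and any n×n matrix A over ℂ, per_{β_1+⋯+β_m}(A) = Σ Π_{j=1}^m per_{β_j}(A[I_j]), where the sum is over all ordered partitions (I_1,…,I_m) of {1,…,n} into m disjoint (possibly empty) subsets, and A[I] denotes the principal submatrix of A with rows and columns indexed by I. -/
open Finset Matrix
open scoped ComplexOrder

/-- Number of disjoint cycles (including fixed points) of a permutation. -/
def nCycles {ι : Type} [Fintype ι] [DecidableEq ι] (π : Equiv.Perm ι) : ℕ :=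
  π.cycleType.card + (Fintype.card ι - π.support.card)

/-- The α-permanent of a matrix. -/
def aperm {ι : Type} [Fintype ι] [DecidableEq ι] {R : Type} [CommRing R]
    (α : R) (A : Matrix ι ι R) : R :=
  ∑ π : Equiv.Perm ι, α ^ nCycles π * ∏ i, A i (π i)

/-- The ordinary permanent of a matrix. -/
def perm {ι : Type} [Fintype ι] [DecidableEq ι] {R : Type} [CommRing R] (A : Matrix ι ι R) : R :=
  ∑ π : Equiv.Perm ι, ∏ i, A i (π i)

/-- Principal submatrix indexed by a finite subset of the index set. -/
def subm {ι : Type} {R : Type} (A : Matrix ι ι R) (I : Finset ι) : Matrix I I R :=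
  fun i j => A i j

/-- Generalized binomial coefficient C(α, k) = α(α-1)⋯(α-k+1)/k!. -/
noncomputable def gbinom {K : Type} [Field K] (α : K) (k : ℕ) : K :=
  (∏ i ∈ Finset.range k, (α - i)) / (Nat.factorial k : K)

/-- The hafnian of a `2m × 2m` matrix,
`haf C = (1/(m! 2^m)) Σ_{π ∈ S_{2m}} c_{π(1),π(2)} ⋯ c_{π(2m-1),π(2m)}`. -/
noncomputable def hafnian {m : ℕ} (C : Matrix (Fin (2 * m)) (Fin (2 * m)) ℝ) : ℝ :=
  ((Nat.factorial m : ℝ) * 2 ^ m)⁻¹ *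
    ∑ π : Equiv.Perm (Fin (2 * m)), ∏ i : Fin m,
      C (π ⟨2 * i.1, by have := i.2; omega⟩) (π ⟨2 * i.1 + 1, by have := i.2; omega⟩)

/-- The doubled block matrix [[A, A], [A, A]]. -/
def dbl {n : ℕ} (A : Matrix (Fin n) (Fin n) ℝ) : Matrix (Fin (2 * n)) (Fin (2 * n)) ℝ :=
  fun i j => A ⟨i.1 % n, Nat.mod_lt _ (by have := i.2; omega)⟩
               ⟨j.1 % n, Nat.mod_lt _ (by have := j.2; omega)⟩

/-- The principal submatrix `A[I]`, reindexed by `Fin I.card` via the order isomorphism. -/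
def submFin {n : ℕ} (A : Matrix (Fin n) (Fin n) ℝ) (I : Finset (Fin n)) :
    Matrix (Fin I.card) (Fin I.card) ℝ :=
  fun i j => A ↑(I.orderIsoOfFin rfl i) ↑(I.orderIsoOfFin rfl j)

/-- `per_β(A, k)`: the sum over all ordered partitions of the index set into `k`
disjoint nonempty subsets `(I_1, …, I_k)` of `∏_j per_β A[I_j]`.  Ordered partitions
into nonempty parts are encoded as surjections onto `Fin k`. -/
noncomputable def apermPart {n : ℕ} (β : ℂ) (A : Matrix (Fin n) (Fin n) ℂ) (k : ℕ) : ℂ :=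
  ∑ f ∈ Finset.univ.filter (fun f : Fin n → Fin k => Function.Surjective f),
    ∏ j, aperm β (subm A (Finset.univ.filter fun i => f i = j))

/-- `per(A, k)`: as `apermPart` but with the ordinary permanent. -/
noncomputable def permPart {ι : Type} [Fintype ι] [DecidableEq ι] {R : Type} [CommRing R]
    (A : Matrix ι ι R) (k : ℕ) : R :=
  ∑ f ∈ Finset.univ.filter (fun f : ι → Fin k => Function.Surjective f),
    ∏ j, perm (subm A (Finset.univ.filter fun i => f i = j))

/-- `det(A, k)`: as `apermPart` but with the determinant. -/
noncomputable def detPart {ι : Type} [Fintype ι] [DecidableEq ι] {R : Type} [CommRing R]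
    (A : Matrix ι ι R) (k : ℕ) : R :=
  ∑ f ∈ Finset.univ.filter (fun f : ι → Fin k => Function.Surjective f),
    ∏ j, Matrix.det (subm A (Finset.univ.filter fun i => f i = j))

/-- The sum over ordered partitions of the index set into `k` nonempty subsets of the
products of the hafnians of the doubled principal submatrices. -/
noncomputable def hafPart {n : ℕ} (A : Matrix (Fin n) (Fin n) ℝ) (k : ℕ) : ℝ :=
  ∑ f ∈ Finset.univ.filter (fun f : Fin n → Fin k => Function.Surjective f),
    ∏ j, hafnian (dbl (submFin A (Finset.univ.filter fun i => f i = j)))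

/-- The average, over ordered set partitions `(I_1, …, I_k)` of the index set with
`|I_j| = t j`, of `∏_j per A[I_j]` (real part). -/
noncomputable def avgPerm {n k : ℕ} (A : Matrix (Fin n) (Fin n) ℂ) (t : Fin k → ℕ) : ℝ :=
  (∑ f ∈ Finset.univ.filter
      (fun f : Fin n → Fin k => ∀ j, (Finset.univ.filter fun i => f i = j).card = t j),
      (∏ j, perm (subm A (Finset.univ.filter fun i => f i = j))).re) /
    (Finset.univ.filter
      (fun f : Fin n → Fin k => ∀ j, (Finset.univ.filter fun i => f i = j).card = t j)).card

/-- The average, over ordered set partitions `(I_1, …, I_k)` of the index set with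
`|I_j| = t j`, of `∏_j det A[I_j]` (real part). -/
noncomputable def avgDet {n k : ℕ} (A : Matrix (Fin n) (Fin n) ℂ) (t : Fin k → ℕ) : ℝ :=
  (∑ f ∈ Finset.univ.filter
      (fun f : Fin n → Fin k => ∀ j, (Finset.univ.filter fun i => f i = j).card = t j),
      (∏ j, Matrix.det (subm A (Finset.univ.filter fun i => f i = j))).re) /
    (Finset.univ.filter
      (fun f : Fin n → Fin k => ∀ j, (Finset.univ.filter fun i => f i = j).card = t j)).card

section W1
set_option linter.unusedSectionVars false
variable {ι : Type} [Fintype ι] [DecidableEq ι]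

instance qDecEq (π : Equiv.Perm ι) : DecidableEq (Quotient (Equiv.Perm.SameCycle.setoid π)) :=
  @Quotient.decidableEq _ _ (fun a b => inferInstanceAs (Decidable (π.SameCycle a b)))

instance qFintype (π : Equiv.Perm ι) : Fintype (Quotient (Equiv.Perm.SameCycle.setoid π)) :=
  @Quotient.fintype _ _ (Equiv.Perm.SameCycle.setoid π)
    (fun a b => inferInstanceAs (Decidable (π.SameCycle a b)))

/-- Number of cycles equals number of orbit classes. -/
lemma nCycles_eq_card_quot (π : Equiv.Perm ι) :
    nCycles π = Fintype.card (Quotient (Equiv.Perm.SameCycle.setoid π)) := by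
  classical
  let φ : Quotient (Equiv.Perm.SameCycle.setoid π) →
      (↥π.cycleFactorsFinset ⊕ {i : ι // π i = i}) :=
    Quotient.lift (fun i => if h : π i = i then Sum.inr ⟨i, h⟩ else
      Sum.inl ⟨π.cycleOf i, Equiv.Perm.cycleOf_mem_cycleFactorsFinset_iff.2
        (Equiv.Perm.mem_support.2 h)⟩) (by
      intro a b hab
      change Equiv.Perm.SameCycle π a b at hab
      by_cases ha : π a = a
      · have hb : b = a := by
          obtain ⟨k, hk⟩ := hab
          rw [← hk, Equiv.Perm.zpow_apply_eq_self_of_apply_eq_self ha]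
        subst hb; rfl
      · have hb : ¬ π b = b := by
          intro hb
          apply ha
          obtain ⟨k, hk⟩ := hab.symm
          rw [← hk, Equiv.Perm.zpow_apply_eq_self_of_apply_eq_self hb]
          exact hb
        show (if h : π a = a then _ else _) = (if h : π b = b then _ else _)
        rw [dif_neg ha, dif_neg hb]
        exact congrArg _ (Subtype.ext (hab.cycleOf_eq)))
  have hbij : Function.Bijective φ := by
    constructor
    · rintro ⟨a⟩ ⟨b⟩ hab
      change φ ⟦a⟧ = φ ⟦b⟧ at hab
      have hlift : ∀ c : ι, φ ⟦c⟧ = if h : π c = c then Sum.inr ⟨c, h⟩ else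
          Sum.inl ⟨π.cycleOf c, Equiv.Perm.cycleOf_mem_cycleFactorsFinset_iff.2
            (Equiv.Perm.mem_support.2 h)⟩ := fun c => rfl
      rw [hlift a, hlift b] at hab
      by_cases ha : π a = a <;> by_cases hb : π b = b
      · rw [dif_pos ha, dif_pos hb] at hab
        obtain rfl : a = b := congrArg Subtype.val (Sum.inr.inj hab)
        rfl
      · rw [dif_pos ha, dif_neg hb] at hab; exact absurd hab (by simp)
      · rw [dif_neg ha, dif_pos hb] at hab; exact absurd hab (by simp)
      · rw [dif_neg ha, dif_neg hb] at hab
        have hco : π.cycleOf a = π.cycleOf b :=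
          congrArg Subtype.val (Sum.inl.inj hab)
        refine Quotient.sound ?_
        change Equiv.Perm.SameCycle π a b
        have hbmem : b ∈ (π.cycleOf a).support := by
          rw [hco, Equiv.Perm.mem_support_cycleOf_iff]
          exact ⟨Equiv.Perm.SameCycle.refl _ _, Equiv.Perm.mem_support.2 hb⟩
        exact (Equiv.Perm.mem_support_cycleOf_iff.1 hbmem).1
    · rintro (⟨c, hc⟩ | ⟨i, hi⟩)
      · have hc' := Equiv.Perm.mem_cycleFactorsFinset_iff.1 hc
        obtain ⟨a, ha⟩ := hc'.1.nonempty_support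
        have hπa : ¬ π a = a := by
          have h2 := hc'.2 a ha
          rw [Equiv.Perm.mem_support] at ha
          rw [← h2]; exact ha
        refine ⟨⟦a⟧, ?_⟩
        show (if h : π a = a then _ else _) = _
        rw [dif_neg hπa]
        exact congrArg _ (Subtype.ext (Equiv.Perm.cycle_is_cycleOf ha hc).symm)
      · refine ⟨⟦i⟧, ?_⟩
        show (if h : π i = i then _ else _) = _
        rw [dif_pos hi]
  rw [Fintype.card_of_bijective hbij]
  rw [Fintype.card_sum, Fintype.card_coe, Fintype.card_subtype]
  have h1 : π.cycleType.card = π.cycleFactorsFinset.card := by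
    rw [Equiv.Perm.cycleType_def, Multiset.card_map]; rfl
  have h2 : (univ.filter fun i => π i = i).card = Fintype.card ι - π.support.card := by
    have h3 := Finset.card_filter_add_card_filter_not
      (s := (univ : Finset ι)) (p := fun i => π i = i)
    have hsupp : π.support.card = (univ.filter fun i => ¬ π i = i).card := rfl
    simp only [Finset.card_univ] at h3
    omega
  rw [nCycles, h1, h2]

end W1

section W2
set_option linter.unusedSectionVars false
variable {ι : Type} [Fintype ι] [DecidableEq ι]

lemma f_zpow_invariant (π : Equiv.Perm ι) {m : ℕ} (f : ι → Fin m)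
    (hf : ∀ i, f (π i) = f i) : ∀ (k : ℤ) (i : ι), f ((π ^ k) i) = f i := by
  have hnat : ∀ (n : ℕ) (i : ι), f ((π ^ n) i) = f i := by
    intro n
    induction n with
    | zero => intro i; simp
    | succ n ih => intro i; rw [pow_succ', Equiv.Perm.mul_apply, hf, ih]
  intro k i
  cases k with
  | ofNat n => exact hnat n i
  | negSucc n =>
    rw [zpow_negSucc]
    have h := hnat (n + 1) ((π ^ (n + 1))⁻¹ i)
    rw [Equiv.Perm.inv_def, Equiv.apply_symm_apply] at h
    exact h.symm

def liftF (π : Equiv.Perm ι) {m : ℕ} (f : ι → Fin m) (hf : ∀ i, f (π i) = f i) :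
    Quotient (Equiv.Perm.SameCycle.setoid π) → Fin m :=
  Quotient.lift f (fun a b hab => by
    obtain ⟨k, hk⟩ := (hab : Equiv.Perm.SameCycle π a b)
    rw [← hk, f_zpow_invariant π f hf])

def restrictPerm (π : Equiv.Perm ι) {m : ℕ} (f : ι → Fin m) (hf : ∀ i, f (π i) = f i)
    (j : Fin m) : Equiv.Perm ↥(Finset.univ.filter fun i => f i = j) :=
  π.subtypePerm (fun x => by
    simp only [Finset.mem_filter, Finset.mem_univ, true_and, hf])

lemma card_quot_restrict (π : Equiv.Perm ι) {m : ℕ} (f : ι → Fin m)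
    (hf : ∀ i, f (π i) = f i) (j : Fin m) :
    Fintype.card (Quotient (Equiv.Perm.SameCycle.setoid (restrictPerm π f hf j)))
      = (Finset.univ.filter fun q => liftF π f hf q = j).card := by
  classical
  let ψ : Quotient (Equiv.Perm.SameCycle.setoid (restrictPerm π f hf j)) →
      {q : Quotient (Equiv.Perm.SameCycle.setoid π) // liftF π f hf q = j} :=
    Quotient.lift
      (fun x => ⟨⟦x.1⟧, (Finset.mem_filter.1 x.2).2⟩)
      (by
        rintro a b ⟨k, hk⟩
        refine Subtype.ext (Quotient.sound ⟨k, ?_⟩)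
        rw [restrictPerm, Equiv.Perm.subtypePerm_zpow] at hk
        exact congrArg Subtype.val hk)
  have hbij : Function.Bijective ψ := by
    constructor
    · rintro ⟨a⟩ ⟨b⟩ hab
      have hab' : (⟦a.1⟧ : Quotient (Equiv.Perm.SameCycle.setoid π)) = ⟦b.1⟧ :=
        congrArg Subtype.val hab
      obtain ⟨k, hk⟩ := Quotient.exact hab'
      refine Quotient.sound ⟨k, ?_⟩
      rw [restrictPerm, Equiv.Perm.subtypePerm_zpow]
      exact Subtype.ext hk
    · rintro ⟨q, hq⟩
      obtain ⟨i, rfl⟩ := Quotient.exists_rep q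
      have hfi : f i = j := hq
      refine ⟨⟦⟨i, by simp [hfi]⟩⟧, Subtype.ext rfl⟩
  rw [Fintype.card_of_bijective hbij, Fintype.card_subtype]

lemma key_pow (π : Equiv.Perm ι) {m : ℕ} (β : Fin m → ℂ) :
    (∑ j, β j) ^ nCycles π =
      ∑ fp : {f : ι → Fin m // ∀ i, f (π i) = f i},
        ∏ j, β j ^ nCycles (restrictPerm π fp.1 fp.2 j) := by
  classical
  let Q := Quotient (Equiv.Perm.SameCycle.setoid π)
  let E : {f : ι → Fin m // ∀ i, f (π i) = f i} ≃ (Q → Fin m) :=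
  { toFun := fun fp => liftF π fp.1 fp.2
    invFun := fun g => ⟨fun i => g ⟦i⟧, fun i =>
      congrArg g (Quotient.sound ⟨-1, by simp⟩)⟩
    left_inv := fun fp => Subtype.ext (funext fun i => rfl)
    right_inv := fun g => funext fun q => Quotient.inductionOn q fun i => rfl }
  have step1 : ∑ fp : {f : ι → Fin m // ∀ i, f (π i) = f i},
        ∏ j, β j ^ nCycles (restrictPerm π fp.1 fp.2 j)
      = ∑ g : Q → Fin m, ∏ j, β j ^ (Finset.univ.filter fun q => g q = j).card := by
    refine Fintype.sum_equiv E _ _ (fun fp => ?_)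
    refine Finset.prod_congr rfl (fun j _ => ?_)
    rw [nCycles_eq_card_quot, card_quot_restrict]
    rfl
  rw [step1]
  have step2 : ∀ g : Q → Fin m,
      (∏ j, β j ^ (Finset.univ.filter fun q => g q = j).card) = ∏ q, β (g q) := by
    intro g
    rw [← Finset.prod_fiberwise Finset.univ g (fun q => β (g q))]
    refine Finset.prod_congr rfl (fun j _ => ?_)
    rw [Finset.prod_congr rfl (fun q hq => by
      rw [(Finset.mem_filter.1 hq).2] : ∀ q ∈ _, β (g q) = β j)]
    rw [Finset.prod_const]
  rw [Finset.sum_congr rfl (fun g _ => step2 g)]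
  rw [← Fintype.prod_sum (fun (_ : Q) (j : Fin m) => β j)]
  rw [Finset.prod_const, Finset.card_univ, ← nCycles_eq_card_quot]
end W2

section W3
set_option linter.unusedSectionVars false
variable {ι : Type} [Fintype ι] [DecidableEq ι]


def combine {m : ℕ} (f : ι → Fin m)
    (σ : ∀ j, Equiv.Perm ↥(Finset.univ.filter fun i => f i = j)) : Equiv.Perm ι :=
  (Equiv.sigmaFiberEquiv f).permCongr
    (Equiv.sigmaCongrRight (fun j =>
      (Equiv.subtypeEquivRight (fun i => by
        simp only [Finset.mem_filter, Finset.mem_univ, true_and])).permCongr (σ j)))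

lemma combine_apply {m : ℕ} (f : ι → Fin m)
    (σ : ∀ j, Equiv.Perm ↥(Finset.univ.filter fun i => f i = j)) (i : ι) :
    combine f σ i = (σ (f i) ⟨i, by simp⟩ : ↥(Finset.univ.filter fun i' => f i' = f i)).1 :=
  rfl

lemma combine_mem {m : ℕ} (f : ι → Fin m)
    (σ : ∀ j, Equiv.Perm ↥(Finset.univ.filter fun i => f i = j)) (i : ι) :
    f (combine f σ i) = f i := by
  rw [combine_apply]
  exact (Finset.mem_filter.1 (σ (f i) ⟨i, by simp⟩).2).2

lemma combine_spec {m : ℕ} (f : ι → Fin m)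
    (σ : ∀ j, Equiv.Perm ↥(Finset.univ.filter fun i => f i = j)) (j : Fin m)
    (i : ι) (hi : i ∈ Finset.univ.filter fun i' => f i' = j) :
    ((σ j ⟨i, hi⟩ : ↥(Finset.univ.filter fun i' => f i' = j))).1 = combine f σ i := by
  have hj : f i = j := (Finset.mem_filter.1 hi).2
  subst hj
  rfl

lemma restrict_combine {m : ℕ} (f : ι → Fin m)
    (σ : ∀ j, Equiv.Perm ↥(Finset.univ.filter fun i => f i = j)) (j : Fin m) :
    restrictPerm (combine f σ) f (combine_mem f σ) j = σ j := by
  refine Equiv.ext (fun x => ?_)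
  refine Subtype.ext ?_
  exact (combine_spec f σ j x.1 x.2).symm

def bigE {m : ℕ} :
    (Σ f : ι → Fin m, ∀ j, Equiv.Perm ↥(Finset.univ.filter fun i => f i = j)) ≃
      (Σ π : Equiv.Perm ι, {f : ι → Fin m // ∀ i, f (π i) = f i}) where
  toFun x := ⟨combine x.1 x.2, x.1, combine_mem x.1 x.2⟩
  invFun y := ⟨y.2.1, fun j => restrictPerm y.1 y.2.1 y.2.2 j⟩
  left_inv x := by
    obtain ⟨f, σ⟩ := x
    exact congrArg (Sigma.mk f) (funext fun j => restrict_combine f σ j)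
  right_inv y := by
    obtain ⟨π, f, hf⟩ := y
    have hc : combine f (fun j => restrictPerm π f hf j) = π := by
      refine Equiv.ext (fun i => ?_)
      rw [← combine_spec f (fun j => restrictPerm π f hf j) (f i) i (by simp)]
      rfl
    have hs : ∀ (π₁ π₂ : Equiv.Perm ι) (h : π₁ = π₂)
        (p₁ : {f : ι → Fin m // ∀ i, f (π₁ i) = f i})
        (p₂ : {f : ι → Fin m // ∀ i, f (π₂ i) = f i}), p₁.1 = p₂.1 → HEq p₁ p₂ := by
      rintro π₁ _ rfl p₁ p₂ h
      exact heq_of_eq (Subtype.ext h)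
    exact Sigma.ext hc (hs _ _ hc _ _ rfl)

theorem gen_aperm {m : ℕ} (β : Fin m → ℂ) (A : Matrix ι ι ℂ) :
    aperm (∑ j, β j) A =
      ∑ f : ι → Fin m,
        ∏ j, aperm (β j)
          (subm A (Finset.univ.filter fun i => f i = j)) := by
  classical
  -- RHS
  have rhs1 : ∀ f : ι → Fin m,
      (∏ j, aperm (β j)
        (subm A (Finset.univ.filter fun i => f i = j)))
      = ∑ σ : ∀ j, Equiv.Perm ↥(Finset.univ.filter fun i => f i = j),
          ∏ j, (β j ^ nCycles (σ j) * ∏ i, A i.1 ((σ j) i).1) := by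
    intro f
    simp only [aperm]
    exact Fintype.prod_sum _
  calc aperm (∑ j, β j) A
      = ∑ π : Equiv.Perm ι, ∑ fp : {f : ι → Fin m // ∀ i, f (π i) = f i},
          (∏ j, β j ^ nCycles (restrictPerm π fp.1 fp.2 j)) * ∏ i, A i (π i) := by
        rw [aperm]
        refine Finset.sum_congr rfl fun π _ => ?_
        rw [key_pow, Finset.sum_mul]
    _ = ∑ y : Σ π : Equiv.Perm ι, {f : ι → Fin m // ∀ i, f (π i) = f i},
          (∏ j, β j ^ nCycles (restrictPerm y.1 y.2.1 y.2.2 j)) * ∏ i, A i (y.1 i) := by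
        rw [← Finset.univ_sigma_univ, Finset.sum_sigma]
    _ = ∑ x : Σ f : ι → Fin m, ∀ j, Equiv.Perm ↥(Finset.univ.filter fun i => f i = j),
          ∏ j, (β j ^ nCycles (x.2 j) *
            ∏ i : ↥(Finset.univ.filter fun i => x.1 i = j), A i.1 ((x.2 j i)).1) := by
        refine (Fintype.sum_equiv bigE _ _ fun x => ?_).symm
        obtain ⟨f, σ⟩ := x
        show (∏ j, (β j ^ nCycles (σ j) *
            ∏ i : ↥(Finset.univ.filter fun i => f i = j), A i.1 ((σ j i)).1))
          = (∏ j, β j ^ nCycles (restrictPerm (combine f σ) f (combine_mem f σ) j)) *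
            ∏ i, A i (combine f σ i)
        rw [Finset.prod_mul_distrib]
        congr 1
        · refine Finset.prod_congr rfl fun j _ => ?_
          rw [restrict_combine]
        · have h1 : ∀ j, (∏ i : ↥(Finset.univ.filter fun i => f i = j), A i.1 ((σ j i)).1)
              = ∏ i ∈ Finset.univ.filter (fun i => f i = j), A i (combine f σ i) := by
            intro j
            rw [← Finset.prod_coe_sort (Finset.univ.filter fun i => f i = j)
              (fun i => A i (combine f σ i))]
            refine Finset.prod_congr rfl fun i _ => ?_
            exact congrArg (A i.1) (combine_spec f σ j i.1 i.2)
          rw [Finset.prod_congr rfl (fun j _ => h1 j)]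
          exact Finset.prod_fiberwise _ _ _
    _ = ∑ f : ι → Fin m,
          ∑ σ : ∀ j, Equiv.Perm ↥(Finset.univ.filter fun i => f i = j),
            ∏ j, (β j ^ nCycles (σ j) *
              ∏ i : ↥(Finset.univ.filter fun i => f i = j), A i.1 ((σ j i)).1) := by
        rw [← Finset.univ_sigma_univ, Finset.sum_sigma]
    _ = ∑ f : ι → Fin m,
        ∏ j, aperm (β j)
          (subm A (Finset.univ.filter fun i => f i = j)) := by
        exact Finset.sum_congr rfl fun f _ => (rhs1 f).symm
end W3


/-- `per_{β₁+⋯+β_m}(A) = Σ Π_j per_{β_j}(A[I_j])` over all ordered partitions of the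
index set into `m` disjoint (possibly empty) subsets, encoded as maps `Fin n → Fin m`. -/
theorem stmt1 (n m : ℕ) (β : Fin m → ℂ) (A : Matrix (Fin n) (Fin n) ℂ) :
    aperm (∑ j, β j) A =
      ∑ f : Fin n → Fin m,
        ∏ j, aperm (β j) (subm A (Finset.univ.filter fun i => f i = j)) := by
  exact gen_aperm β A
end

section
/- If A and D are positive semi-definite Hermitian n×n matrices where D is obtained from A by replacing the off-diagonal blocks with zero (A = [[A',B],[B*,A'']], D = [[A',0],[0,A'']]), then for every k, per(A,k) ≥ per(D,k), where per(M,k) = Σ_{(I_1,…,I_k)} Π_j per(M[I_j]) over ordered partitions of {1,…,n} into k nonempty subsets. -/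
open Finset Matrix
open scoped ComplexOrder

namespace L11

/-- generalized permanental pairing -/
noncomputable def genPer {ρ ι : Type} [Fintype ρ] [DecidableEq ρ] [Fintype ι]
    (M : Matrix ι ι ℂ) (x y : ρ → ι) : ℂ :=
  ∑ σ : Equiv.Perm ρ, ∏ t, M (x t) (y (σ t))

lemma prod_sum_fn {ρ ι : Type} [Fintype ρ] [DecidableEq ρ] [Fintype ι] (F : ρ → ι → ℂ) :
    ∑ κ : ρ → ι, ∏ t, F t (κ t) = ∏ t, ∑ k, F t k := by
  rw [Finset.prod_univ_sum, Fintype.piFinset_univ]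

lemma lpos {κ ρ₁ ρ₂ ι₁ ι₂ : Type} [Fintype κ] [Fintype ρ₁] [Fintype ρ₂]
    [DecidableEq ρ₁] [DecidableEq ρ₂] [Fintype ι₁] [Fintype ι₂]
    [DecidableEq ι₁] [DecidableEq ι₂]
    {M : Matrix ι₁ ι₁ ℂ} {N : Matrix ι₂ ι₂ ℂ} (hM : M.PosSemidef) (hN : N.PosSemidef)
    (a : κ → ρ₁ → ι₁) (b : κ → ρ₂ → ι₂) (c : κ → ℂ) :
    0 ≤ ∑ p, ∑ q, c p * (starRingEnd ℂ) (c q) * genPer M (a p) (a q) *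
      (starRingEnd ℂ) (genPer N (b p) (b q)) := by
  obtain ⟨G, hG⟩ := (by
    open scoped MatrixOrder in
    obtain ⟨X, hX, -, hXM⟩ := CFC.exists_sqrt_of_isSelfAdjoint_of_quasispectrumRestricts
      hM.isHermitian (QuasispectrumRestricts.nnreal_of_nonneg hM.nonneg)
    exact ⟨X, by rw [← hXM, ← Matrix.star_eq_conjTranspose, hX.star_eq]⟩ :
    ∃ G : Matrix ι₁ ι₁ ℂ, M = Gᴴ * G)
  obtain ⟨H, hH⟩ := (by
    open scoped MatrixOrder in
    obtain ⟨X, hX, -, hXM⟩ := CFC.exists_sqrt_of_isSelfAdjoint_of_quasispectrumRestricts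
      hN.isHermitian (QuasispectrumRestricts.nnreal_of_nonneg hN.nonneg)
    exact ⟨X, by rw [← hXM, ← Matrix.star_eq_conjTranspose, hX.star_eq]⟩ :
    ∃ G : Matrix ι₂ ι₂ ℂ, N = Gᴴ * G)
  set W : κ → (ρ₁ → ι₁) → ℂ :=
    fun p κ₁ => ∑ σ : Equiv.Perm ρ₁, ∏ t, G (κ₁ t) (a p (σ t)) with hW
  set V : κ → (ρ₂ → ι₂) → ℂ :=
    fun p κ₂ => ∑ σ : Equiv.Perm ρ₂, ∏ t, H (κ₂ t) (b p (σ t)) with hV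
  have key1 : ∀ (ρ ι : Type) (_ : Fintype ρ) (_ : DecidableEq ρ) (_ : Fintype ι)
      (_ : DecidableEq ι) (G : Matrix ι ι ℂ) (M : Matrix ι ι ℂ) (_ : M = Gᴴ * G)
      (x y : ρ → ι),
      ∑ κ' : ρ → ι, (starRingEnd ℂ) (∑ σ : Equiv.Perm ρ, ∏ t, G (κ' t) (x (σ t)))
          * (∑ σ : Equiv.Perm ρ, ∏ t, G (κ' t) (y (σ t)))
        = (Fintype.card (Equiv.Perm ρ) : ℂ) * genPer M x y := by
    intro ρ ι _ _ _ _ G M hGM x y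
    have hM' : ∀ u v, ∑ k, (starRingEnd ℂ) (G k u) * G k v = M u v := by
      intro u v
      rw [hGM, Matrix.mul_apply]
      simp [Matrix.conjTranspose_apply]
    calc
      ∑ κ' : ρ → ι, (starRingEnd ℂ) (∑ σ : Equiv.Perm ρ, ∏ t, G (κ' t) (x (σ t)))
          * (∑ σ : Equiv.Perm ρ, ∏ t, G (κ' t) (y (σ t)))
        = ∑ κ' : ρ → ι, ∑ σ : Equiv.Perm ρ, ∑ τ : Equiv.Perm ρ,
            ∏ t, ((starRingEnd ℂ) (G (κ' t) (x (σ t))) * G (κ' t) (y (τ t))) := by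
          refine Finset.sum_congr rfl fun κ' _ => ?_
          rw [_root_.map_sum, Finset.sum_mul_sum]
          refine Finset.sum_congr rfl fun σ _ => Finset.sum_congr rfl fun τ _ => ?_
          rw [_root_.map_prod, ← Finset.prod_mul_distrib]
      _ = ∑ σ : Equiv.Perm ρ, ∑ τ : Equiv.Perm ρ, ∑ κ' : ρ → ι,
            ∏ t, ((starRingEnd ℂ) (G (κ' t) (x (σ t))) * G (κ' t) (y (τ t))) := by
          rw [Finset.sum_comm]
          exact Finset.sum_congr rfl fun σ _ => Finset.sum_comm
      _ = ∑ σ : Equiv.Perm ρ, ∑ τ : Equiv.Perm ρ, ∏ t, M (x (σ t)) (y (τ t)) := by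
          refine Finset.sum_congr rfl fun σ _ => Finset.sum_congr rfl fun τ _ => ?_
          rw [prod_sum_fn (F := fun t k => (starRingEnd ℂ) (G k (x (σ t))) * G k (y (τ t)))]
          exact Finset.prod_congr rfl fun t _ => hM' _ _
      _ = ∑ _σ : Equiv.Perm ρ, genPer M x y := by
          refine Finset.sum_congr rfl fun σ _ => ?_
          rw [genPer]
          refine Fintype.sum_bijective (fun τ => τ * σ⁻¹)
            (Group.mulRight_bijective σ⁻¹) _ _ fun τ => ?_
          rw [← Equiv.prod_comp σ (fun s => M (x s) (y ((τ * σ⁻¹) s)))]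
          exact Finset.prod_congr rfl fun t _ => by
            simp [Equiv.Perm.mul_apply]
      _ = (Fintype.card (Equiv.Perm ρ) : ℂ) * genPer M x y := by
          rw [Finset.sum_const, Finset.card_univ, nsmul_eq_mul]
  have K1 : ∀ p q, ∑ κ₁ : ρ₁ → ι₁, (starRingEnd ℂ) (W p κ₁) * W q κ₁
      = (Fintype.card (Equiv.Perm ρ₁) : ℂ) * genPer M (a p) (a q) :=
    fun p q => key1 ρ₁ ι₁ inferInstance inferInstance inferInstance inferInstance G M hG (a p) (a q)
  have K2 : ∀ p q, ∑ κ₂ : ρ₂ → ι₂, (starRingEnd ℂ) (V p κ₂) * V q κ₂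
      = (Fintype.card (Equiv.Perm ρ₂) : ℂ) * genPer N (b p) (b q) :=
    fun p q => key1 ρ₂ ι₂ inferInstance inferInstance inferInstance inferInstance H N hH (b p) (b q)
  have K2' : ∀ p q, ∑ κ₂ : ρ₂ → ι₂, V p κ₂ * (starRingEnd ℂ) (V q κ₂)
      = (Fintype.card (Equiv.Perm ρ₂) : ℂ) * (starRingEnd ℂ) (genPer N (b p) (b q)) := by
    intro p q
    have h0 : ∑ κ₂ : ρ₂ → ι₂, V p κ₂ * (starRingEnd ℂ) (V q κ₂)
        = (starRingEnd ℂ) (∑ κ₂ : ρ₂ → ι₂, (starRingEnd ℂ) (V p κ₂) * V q κ₂) := by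
      rw [_root_.map_sum]
      refine Finset.sum_congr rfl fun κ₂ _ => ?_
      rw [_root_.map_mul, Complex.conj_conj]
    rw [h0, K2 p q, _root_.map_mul, map_natCast]
  set y : (ρ₁ → ι₁) × (ρ₂ → ι₂) → ℂ :=
    fun κ' => ∑ p, c p * (starRingEnd ℂ) (W p κ'.1) * V p κ'.2 with hy
  have expand : ∀ κ' : (ρ₁ → ι₁) × (ρ₂ → ι₂), y κ' * (starRingEnd ℂ) (y κ') = ∑ p, ∑ q,
      (c p * (starRingEnd ℂ) (c q)) *
        (((starRingEnd ℂ) (W p κ'.1) * W q κ'.1) * (V p κ'.2 * (starRingEnd ℂ) (V q κ'.2))) := by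
    intro κ'
    rw [hy, _root_.map_sum, Finset.sum_mul_sum]
    refine Finset.sum_congr rfl fun p _ => Finset.sum_congr rfl fun q _ => ?_
    simp only [_root_.map_mul, Complex.conj_conj]
    ring
  have key : (∑ κ' : (ρ₁ → ι₁) × (ρ₂ → ι₂), y κ' * (starRingEnd ℂ) (y κ'))
      = (Fintype.card (Equiv.Perm ρ₁) : ℂ) * ((Fintype.card (Equiv.Perm ρ₂) : ℂ) *
        (∑ p, ∑ q, c p * (starRingEnd ℂ) (c q) * genPer M (a p) (a q) *
          (starRingEnd ℂ) (genPer N (b p) (b q)))) := by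
    calc ∑ κ' : (ρ₁ → ι₁) × (ρ₂ → ι₂), y κ' * (starRingEnd ℂ) (y κ')
        = ∑ p, ∑ q, (c p * (starRingEnd ℂ) (c q)) *
            ((∑ κ₁ : ρ₁ → ι₁, (starRingEnd ℂ) (W p κ₁) * W q κ₁) *
             (∑ κ₂ : ρ₂ → ι₂, V p κ₂ * (starRingEnd ℂ) (V q κ₂))) := by
          simp_rw [expand]
          rw [Finset.sum_comm]
          refine Finset.sum_congr rfl fun p _ => ?_
          rw [Finset.sum_comm]
          refine Finset.sum_congr rfl fun q _ => ?_
          rw [← Finset.mul_sum]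
          congr 1
          rw [Finset.sum_mul_sum]
          exact Fintype.sum_prod_type _
      _ = ∑ p, ∑ q, (c p * (starRingEnd ℂ) (c q)) *
            (((Fintype.card (Equiv.Perm ρ₁) : ℂ) * genPer M (a p) (a q)) *
             ((Fintype.card (Equiv.Perm ρ₂) : ℂ) * (starRingEnd ℂ) (genPer N (b p) (b q)))) := by
          refine Finset.sum_congr rfl fun p _ => Finset.sum_congr rfl fun q _ => ?_
          rw [K1, K2']
      _ = _ := by
          rw [Finset.mul_sum]
          rw [Finset.mul_sum]
          refine Finset.sum_congr rfl fun p _ => ?_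
          rw [Finset.mul_sum, Finset.mul_sum]
          refine Finset.sum_congr rfl fun q _ => by ring
  have hnn : 0 ≤ ∑ κ' : (ρ₁ → ι₁) × (ρ₂ → ι₂), y κ' * (starRingEnd ℂ) (y κ') :=
    Finset.sum_nonneg fun κ' _ => by
      rw [Complex.mul_conj]
      exact Complex.zero_le_real.mpr (Complex.normSq_nonneg _)
  rw [key] at hnn
  have hne1 : (Fintype.card (Equiv.Perm ρ₁) : ℂ) ≠ 0 := by
    exact_mod_cast Nat.cast_ne_zero.mpr Fintype.card_ne_zero
  have hne2 : (Fintype.card (Equiv.Perm ρ₂) : ℂ) ≠ 0 := by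
    exact_mod_cast Nat.cast_ne_zero.mpr Fintype.card_ne_zero
  have hinv : (0:ℂ) ≤ ((Fintype.card (Equiv.Perm ρ₁) : ℂ) * (Fintype.card (Equiv.Perm ρ₂) : ℂ))⁻¹ := by
    have : ((Fintype.card (Equiv.Perm ρ₁) : ℂ) * (Fintype.card (Equiv.Perm ρ₂) : ℂ))⁻¹
        = (((((Fintype.card (Equiv.Perm ρ₁) * Fintype.card (Equiv.Perm ρ₂) : ℕ) : ℝ))⁻¹ : ℝ) : ℂ) := by
      push_cast
      simp
    rw [this]
    exact Complex.zero_le_real.mpr (by positivity)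
  have := mul_nonneg hinv hnn
  calc (0:ℂ) ≤ ((Fintype.card (Equiv.Perm ρ₁) : ℂ) * (Fintype.card (Equiv.Perm ρ₂) : ℂ))⁻¹ *
        ((Fintype.card (Equiv.Perm ρ₁) : ℂ) * ((Fintype.card (Equiv.Perm ρ₂) : ℂ) *
        (∑ p, ∑ q, c p * (starRingEnd ℂ) (c q) * genPer M (a p) (a q) *
          (starRingEnd ℂ) (genPer N (b p) (b q))))) := this
    _ = _ := by
        rw [← mul_assoc ((Fintype.card (Equiv.Perm ρ₁) : ℂ)), ← mul_assoc,
          inv_mul_cancel₀ (mul_ne_zero hne1 hne2), one_mul]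

lemma getRight_eq_of {α β : Type} {x : α ⊕ β} {h : x.isRight} {b : β}
    (hx : x = Sum.inr b) : x.getRight h = b := by subst hx; rfl

lemma getLeft_eq_of {α β : Type} {x : α ⊕ β} {h : x.isLeft} {a : α}
    (hx : x = Sum.inl a) : x.getLeft h = a := by subst hx; rfl

variable {ι₁ ι₂ : Type} [Fintype ι₁] [Fintype ι₂] [DecidableEq ι₁] [DecidableEq ι₂]

/-- crossing data of a permutation of a sum type -/
def invt (σ : Equiv.Perm (ι₁ ⊕ ι₂)) :
    Finset ι₁ × Finset ι₂ × Finset ι₂ × Finset ι₁ :=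
  (univ.filter fun i => (σ (Sum.inl i)).isRight,
   univ.filter fun j => (σ.symm (Sum.inr j)).isLeft,
   univ.filter fun j => (σ (Sum.inr j)).isLeft,
   univ.filter fun i => (σ.symm (Sum.inl i)).isRight)

def crossL (σ : Equiv.Perm (ι₁ ⊕ ι₂)) :
    {i : ι₁ // (σ (Sum.inl i)).isRight} ≃ {j : ι₂ // (σ.symm (Sum.inr j)).isLeft} where
  toFun i := ⟨(σ (Sum.inl i.1)).getRight i.2, by
    rw [Sum.inr_getRight, Equiv.symm_apply_apply]; rfl⟩
  invFun j := ⟨(σ.symm (Sum.inr j.1)).getLeft j.2, by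
    rw [Sum.inl_getLeft, Equiv.apply_symm_apply]; rfl⟩
  left_inv i := Subtype.ext (getLeft_eq_of (by rw [Sum.inr_getRight, Equiv.symm_apply_apply]))
  right_inv j := Subtype.ext (getRight_eq_of (by rw [Sum.inl_getLeft, Equiv.apply_symm_apply]))

def crossR (σ : Equiv.Perm (ι₁ ⊕ ι₂)) :
    {j : ι₂ // (σ (Sum.inr j)).isLeft} ≃ {i : ι₁ // (σ.symm (Sum.inl i)).isRight} where
  toFun j := ⟨(σ (Sum.inr j.1)).getLeft j.2, by
    rw [Sum.inl_getLeft, Equiv.symm_apply_apply]; rfl⟩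
  invFun i := ⟨(σ.symm (Sum.inl i.1)).getRight i.2, by
    rw [Sum.inr_getRight, Equiv.apply_symm_apply]; rfl⟩
  left_inv j := Subtype.ext (getRight_eq_of (by rw [Sum.inl_getLeft, Equiv.symm_apply_apply]))
  right_inv i := Subtype.ext (getLeft_eq_of (by rw [Sum.inr_getRight, Equiv.apply_symm_apply]))

def stayL (σ : Equiv.Perm (ι₁ ⊕ ι₂)) :
    {i : ι₁ // ¬(σ (Sum.inl i)).isRight} ≃ {i : ι₁ // ¬(σ.symm (Sum.inl i)).isRight} where
  toFun i := ⟨(σ (Sum.inl i.1)).getLeft (Sum.not_isRight.mp i.2), by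
    rw [Sum.inl_getLeft, Equiv.symm_apply_apply]; simp⟩
  invFun i := ⟨(σ.symm (Sum.inl i.1)).getLeft (Sum.not_isRight.mp i.2), by
    rw [Sum.inl_getLeft, Equiv.apply_symm_apply]; simp⟩
  left_inv i := Subtype.ext (getLeft_eq_of (by rw [Sum.inl_getLeft, Equiv.symm_apply_apply]))
  right_inv i := Subtype.ext (getLeft_eq_of (by rw [Sum.inl_getLeft, Equiv.apply_symm_apply]))

def stayR (σ : Equiv.Perm (ι₁ ⊕ ι₂)) :
    {j : ι₂ // ¬(σ (Sum.inr j)).isLeft} ≃ {j : ι₂ // ¬(σ.symm (Sum.inr j)).isLeft} where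
  toFun j := ⟨(σ (Sum.inr j.1)).getRight (Sum.not_isLeft.mp j.2), by
    rw [Sum.inr_getRight, Equiv.symm_apply_apply]; simp⟩
  invFun j := ⟨(σ.symm (Sum.inr j.1)).getRight (Sum.not_isLeft.mp j.2), by
    rw [Sum.inr_getRight, Equiv.apply_symm_apply]; simp⟩
  left_inv j := Subtype.ext (getRight_eq_of (by rw [Sum.inr_getRight, Equiv.symm_apply_apply]))
  right_inv j := Subtype.ext (getRight_eq_of (by rw [Sum.inr_getRight, Equiv.apply_symm_apply]))

/-- build a permutation from block bijections -/
def bp (S : Finset ι₁) (T U : Finset ι₂) (V : Finset ι₁)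
    (e₁ : {i // i ∈ S} ≃ {j // j ∈ T}) (e₂ : {j // j ∈ U} ≃ {i // i ∈ V})
    (e₃ : {i // i ∈ Sᶜ} ≃ {i // i ∈ Vᶜ}) (e₄ : {j // j ∈ Uᶜ} ≃ {j // j ∈ Tᶜ}) :
    Equiv.Perm (ι₁ ⊕ ι₂) where
  toFun x := match x with
    | Sum.inl i => if h : i ∈ S then Sum.inr (e₁ ⟨i, h⟩).1
        else Sum.inl (e₃ ⟨i, Finset.mem_compl.mpr h⟩).1
    | Sum.inr j => if h : j ∈ U then Sum.inl (e₂ ⟨j, h⟩).1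
        else Sum.inr (e₄ ⟨j, Finset.mem_compl.mpr h⟩).1
  invFun x := match x with
    | Sum.inl i => if h : i ∈ V then Sum.inr (e₂.symm ⟨i, h⟩).1
        else Sum.inl (e₃.symm ⟨i, Finset.mem_compl.mpr h⟩).1
    | Sum.inr j => if h : j ∈ T then Sum.inl (e₁.symm ⟨j, h⟩).1
        else Sum.inr (e₄.symm ⟨j, Finset.mem_compl.mpr h⟩).1
  left_inv x := by
    match x with
    | Sum.inl i =>
      by_cases h : i ∈ S
      · dsimp only
        rw [dif_pos h]
        dsimp only
        rw [dif_pos (e₁ ⟨i, h⟩).2]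
        simp
      · dsimp only
        rw [dif_neg h]
        dsimp only
        rw [dif_neg (Finset.mem_compl.mp (e₃ ⟨i, Finset.mem_compl.mpr h⟩).2)]
        simp
    | Sum.inr j =>
      by_cases h : j ∈ U
      · dsimp only
        rw [dif_pos h]
        dsimp only
        rw [dif_pos (e₂ ⟨j, h⟩).2]
        simp
      · dsimp only
        rw [dif_neg h]
        dsimp only
        rw [dif_neg (Finset.mem_compl.mp (e₄ ⟨j, Finset.mem_compl.mpr h⟩).2)]
        simp
  right_inv x := by
    match x with
    | Sum.inl i =>
      by_cases h : i ∈ V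
      · dsimp only
        rw [dif_pos h]
        dsimp only
        rw [dif_pos (e₂.symm ⟨i, h⟩).2]
        simp
      · dsimp only
        rw [dif_neg h]
        dsimp only
        rw [dif_neg (Finset.mem_compl.mp (e₃.symm ⟨i, Finset.mem_compl.mpr h⟩).2)]
        simp
    | Sum.inr j =>
      by_cases h : j ∈ T
      · dsimp only
        rw [dif_pos h]
        dsimp only
        rw [dif_pos (e₁.symm ⟨j, h⟩).2]
        simp
      · dsimp only
        rw [dif_neg h]
        dsimp only
        rw [dif_neg (Finset.mem_compl.mp (e₄.symm ⟨j, Finset.mem_compl.mpr h⟩).2)]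
        simp

section BP
variable {S : Finset ι₁} {T U : Finset ι₂} {V : Finset ι₁}
  (e₁ : {i // i ∈ S} ≃ {j // j ∈ T}) (e₂ : {j // j ∈ U} ≃ {i // i ∈ V})
  (e₃ : {i // i ∈ Sᶜ} ≃ {i // i ∈ Vᶜ}) (e₄ : {j // j ∈ Uᶜ} ≃ {j // j ∈ Tᶜ})

lemma bp_inl_mem {i : ι₁} (h : i ∈ S) :
    bp S T U V e₁ e₂ e₃ e₄ (Sum.inl i) = Sum.inr (e₁ ⟨i, h⟩).1 := dif_pos h

lemma bp_inl_nmem {i : ι₁} (h : i ∉ S) :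
    bp S T U V e₁ e₂ e₃ e₄ (Sum.inl i) = Sum.inl (e₃ ⟨i, Finset.mem_compl.mpr h⟩).1 := dif_neg h

lemma bp_inr_mem {j : ι₂} (h : j ∈ U) :
    bp S T U V e₁ e₂ e₃ e₄ (Sum.inr j) = Sum.inl (e₂ ⟨j, h⟩).1 := dif_pos h

lemma bp_inr_nmem {j : ι₂} (h : j ∉ U) :
    bp S T U V e₁ e₂ e₃ e₄ (Sum.inr j) = Sum.inr (e₄ ⟨j, Finset.mem_compl.mpr h⟩).1 := dif_neg h

lemma bp_symm_inl_mem {i : ι₁} (h : i ∈ V) :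
    (bp S T U V e₁ e₂ e₃ e₄).symm (Sum.inl i) = Sum.inr (e₂.symm ⟨i, h⟩).1 := dif_pos h

lemma bp_symm_inl_nmem {i : ι₁} (h : i ∉ V) :
    (bp S T U V e₁ e₂ e₃ e₄).symm (Sum.inl i)
      = Sum.inl (e₃.symm ⟨i, Finset.mem_compl.mpr h⟩).1 := dif_neg h

lemma bp_symm_inr_mem {j : ι₂} (h : j ∈ T) :
    (bp S T U V e₁ e₂ e₃ e₄).symm (Sum.inr j) = Sum.inl (e₁.symm ⟨j, h⟩).1 := dif_pos h

lemma bp_symm_inr_nmem {j : ι₂} (h : j ∉ T) :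
    (bp S T U V e₁ e₂ e₃ e₄).symm (Sum.inr j)
      = Sum.inr (e₄.symm ⟨j, Finset.mem_compl.mpr h⟩).1 := dif_neg h

lemma invt_bp : invt (bp S T U V e₁ e₂ e₃ e₄) = (S, T, U, V) := by
  have c1 : (univ.filter fun i => ((bp S T U V e₁ e₂ e₃ e₄) (Sum.inl i)).isRight) = S := by
    ext i
    simp only [Finset.mem_filter, Finset.mem_univ, true_and]
    by_cases h : i ∈ S
    · rw [bp_inl_mem e₁ e₂ e₃ e₄ h]; simp [h]
    · rw [bp_inl_nmem e₁ e₂ e₃ e₄ h]; simp [h]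
  have c2 : (univ.filter fun j => ((bp S T U V e₁ e₂ e₃ e₄).symm (Sum.inr j)).isLeft) = T := by
    ext j
    simp only [Finset.mem_filter, Finset.mem_univ, true_and]
    by_cases h : j ∈ T
    · rw [bp_symm_inr_mem e₁ e₂ e₃ e₄ h]; simp [h]
    · rw [bp_symm_inr_nmem e₁ e₂ e₃ e₄ h]; simp [h]
  have c3 : (univ.filter fun j => ((bp S T U V e₁ e₂ e₃ e₄) (Sum.inr j)).isLeft) = U := by
    ext j
    simp only [Finset.mem_filter, Finset.mem_univ, true_and]
    by_cases h : j ∈ U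
    · rw [bp_inr_mem e₁ e₂ e₃ e₄ h]; simp [h]
    · rw [bp_inr_nmem e₁ e₂ e₃ e₄ h]; simp [h]
  have c4 : (univ.filter fun i => ((bp S T U V e₁ e₂ e₃ e₄).symm (Sum.inl i)).isRight) = V := by
    ext i
    simp only [Finset.mem_filter, Finset.mem_univ, true_and]
    by_cases h : i ∈ V
    · rw [bp_symm_inl_mem e₁ e₂ e₃ e₄ h]; simp [h]
    · rw [bp_symm_inl_nmem e₁ e₂ e₃ e₄ h]; simp [h]
  rw [invt, c1, c2, c3, c4]

end BP

lemma pairsum {α β : Type} [Fintype α] [Fintype β] (f : α → ℂ) (g : β → ℂ) :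
    (∑ a, f a) * (∑ b, g b) = ∑ x : α × β, f x.1 * g x.2 := by
  rw [Fintype.sum_mul_sum, Fintype.sum_prod_type]

lemma mul4sum {α₁ α₂ α₃ α₄ : Type} [Fintype α₁] [Fintype α₂] [Fintype α₃] [Fintype α₄]
    (f₁ : α₁ → ℂ) (f₂ : α₂ → ℂ) (f₃ : α₃ → ℂ) (f₄ : α₄ → ℂ) :
    (∑ a, f₁ a) * (∑ b, f₂ b) * (∑ c, f₃ c) * (∑ d, f₄ d)
      = ∑ t : α₁ × α₂ × α₃ × α₄, f₁ t.1 * f₂ t.2.1 * f₃ t.2.2.1 * f₄ t.2.2.2 := by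
  calc (∑ a, f₁ a) * (∑ b, f₂ b) * (∑ c, f₃ c) * (∑ d, f₄ d)
      = ((∑ a, f₁ a) * (∑ b, f₂ b)) * ((∑ c, f₃ c) * (∑ d, f₄ d)) := by ring
    _ = (∑ x : α₁ × α₂, f₁ x.1 * f₂ x.2) * (∑ y : α₃ × α₄, f₃ y.1 * f₄ y.2) := by
        rw [pairsum, pairsum]
    _ = ∑ z : (α₁ × α₂) × (α₃ × α₄), (f₁ z.1.1 * f₂ z.1.2) * (f₃ z.2.1 * f₄ z.2.2) := by
        rw [pairsum]
    _ = _ := by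
        refine Fintype.sum_equiv (Equiv.prodAssoc α₁ α₂ (α₃ × α₄)) _ _ fun z => ?_
        simp [Equiv.prodAssoc]
        ring

lemma fiber_eq (A' : Matrix ι₁ ι₁ ℂ) (B : Matrix ι₁ ι₂ ℂ) (C : Matrix ι₂ ι₁ ℂ)
    (A'' : Matrix ι₂ ι₂ ℂ) (S : Finset ι₁) (T U : Finset ι₂) (V : Finset ι₁) :
    ∑ σ ∈ univ.filter (fun σ : Equiv.Perm (ι₁ ⊕ ι₂) => invt σ = (S, T, U, V)),
        ∏ x, (fromBlocks A' B C A'') x (σ x)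
      = (∑ e : {i // i ∈ S} ≃ {j // j ∈ T}, ∏ i, B i.1 (e i).1)
        * (∑ e : {j // j ∈ U} ≃ {i // i ∈ V}, ∏ j, C j.1 (e j).1)
        * (∑ e : {i // i ∈ Sᶜ} ≃ {i // i ∈ Vᶜ}, ∏ i, A' i.1 (e i).1)
        * (∑ e : {j // j ∈ Uᶜ} ≃ {j // j ∈ Tᶜ}, ∏ j, A'' j.1 (e j).1) := by
  have hR : (∑ e : {i // i ∈ S} ≃ {j // j ∈ T}, ∏ i, B i.1 (e i).1)
        * (∑ e : {j // j ∈ U} ≃ {i // i ∈ V}, ∏ j, C j.1 (e j).1)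
        * (∑ e : {i // i ∈ Sᶜ} ≃ {i // i ∈ Vᶜ}, ∏ i, A' i.1 (e i).1)
        * (∑ e : {j // j ∈ Uᶜ} ≃ {j // j ∈ Tᶜ}, ∏ j, A'' j.1 (e j).1)
      = ∑ t : (({i // i ∈ S} ≃ {j // j ∈ T}) × ({j // j ∈ U} ≃ {i // i ∈ V})
            × ({i // i ∈ Sᶜ} ≃ {i // i ∈ Vᶜ}) × ({j // j ∈ Uᶜ} ≃ {j // j ∈ Tᶜ})),
          (∏ i, B i.1 (t.1 i).1) * (∏ j, C j.1 (t.2.1 j).1)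
            * (∏ i, A' i.1 (t.2.2.1 i).1) * (∏ j, A'' j.1 (t.2.2.2 j).1) :=
    mul4sum _ _ _ _
  rw [hR]
  symm
  refine Finset.sum_nbij (fun t => bp S T U V t.1 t.2.1 t.2.2.1 t.2.2.2) ?_ ?_ ?_ ?_
  · intro t _
    simp [Finset.mem_filter, invt_bp]
  · rintro ⟨a, b, c, d⟩ - ⟨a', b', c', d'⟩ - h
    simp only [Prod.mk.injEq]
    refine ⟨?_, ?_, ?_, ?_⟩
    · refine Equiv.ext fun i => Subtype.ext ?_
      have hx := Equiv.ext_iff.mp h (Sum.inl i.1)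
      rw [bp_inl_mem _ _ _ _ i.2, bp_inl_mem _ _ _ _ i.2] at hx
      simpa using hx
    · refine Equiv.ext fun j => Subtype.ext ?_
      have hx := Equiv.ext_iff.mp h (Sum.inr j.1)
      rw [bp_inr_mem _ _ _ _ j.2, bp_inr_mem _ _ _ _ j.2] at hx
      simpa using hx
    · refine Equiv.ext fun i => Subtype.ext ?_
      have hx := Equiv.ext_iff.mp h (Sum.inl i.1)
      rw [bp_inl_nmem _ _ _ _ (Finset.mem_compl.mp i.2),
        bp_inl_nmem _ _ _ _ (Finset.mem_compl.mp i.2)] at hx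
      simpa using hx
    · refine Equiv.ext fun j => Subtype.ext ?_
      have hx := Equiv.ext_iff.mp h (Sum.inr j.1)
      rw [bp_inr_nmem _ _ _ _ (Finset.mem_compl.mp j.2),
        bp_inr_nmem _ _ _ _ (Finset.mem_compl.mp j.2)] at hx
      simpa using hx
  · intro σ hσ
    simp only [Finset.coe_filter, Finset.mem_univ, true_and, Set.mem_setOf_eq] at hσ
    have h1 : ∀ i : ι₁, i ∈ S ↔ (σ (Sum.inl i)).isRight = true := by
      intro i
      conv_lhs => rw [show S = (invt σ).1 by rw [hσ]]
      simp [invt]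
    have h2 : ∀ j : ι₂, j ∈ T ↔ (σ.symm (Sum.inr j)).isLeft = true := by
      intro j
      conv_lhs => rw [show T = (invt σ).2.1 by rw [hσ]]
      simp [invt]
    have h3 : ∀ j : ι₂, j ∈ U ↔ (σ (Sum.inr j)).isLeft = true := by
      intro j
      conv_lhs => rw [show U = (invt σ).2.2.1 by rw [hσ]]
      simp [invt]
    have h4 : ∀ i : ι₁, i ∈ V ↔ (σ.symm (Sum.inl i)).isRight = true := by
      intro i
      conv_lhs => rw [show V = (invt σ).2.2.2 by rw [hσ]]
      simp [invt]
    have h1c : ∀ i : ι₁, i ∈ Sᶜ ↔ ¬(σ (Sum.inl i)).isRight = true := by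
      intro i; rw [Finset.mem_compl, h1]
    have h4c : ∀ i : ι₁, i ∈ Vᶜ ↔ ¬(σ.symm (Sum.inl i)).isRight = true := by
      intro i; rw [Finset.mem_compl, h4]
    have h3c : ∀ j : ι₂, j ∈ Uᶜ ↔ ¬(σ (Sum.inr j)).isLeft = true := by
      intro j; rw [Finset.mem_compl, h3]
    have h2c : ∀ j : ι₂, j ∈ Tᶜ ↔ ¬(σ.symm (Sum.inr j)).isLeft = true := by
      intro j; rw [Finset.mem_compl, h2]
    refine ⟨((Equiv.subtypeEquivRight h1).trans ((crossL σ).trans (Equiv.subtypeEquivRight h2).symm),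
      (Equiv.subtypeEquivRight h3).trans ((crossR σ).trans (Equiv.subtypeEquivRight h4).symm),
      (Equiv.subtypeEquivRight h1c).trans ((stayL σ).trans (Equiv.subtypeEquivRight h4c).symm),
      (Equiv.subtypeEquivRight h3c).trans ((stayR σ).trans (Equiv.subtypeEquivRight h2c).symm)),
      Finset.mem_coe.mpr (Finset.mem_univ _), ?_⟩
    refine Equiv.ext fun x => ?_
    match x with
    | Sum.inl i =>
      by_cases h : i ∈ S
      · rw [bp_inl_mem _ _ _ _ h]
        simp only [Equiv.trans_apply, Equiv.subtypeEquivRight_apply,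
          Equiv.subtypeEquivRight_symm_apply, crossL, Equiv.coe_fn_mk]
        exact Sum.inr_getRight _ _
      · rw [bp_inl_nmem _ _ _ _ h]
        simp only [Equiv.trans_apply, Equiv.subtypeEquivRight_apply,
          Equiv.subtypeEquivRight_symm_apply, stayL, Equiv.coe_fn_mk]
        exact Sum.inl_getLeft _ _
    | Sum.inr j =>
      by_cases h : j ∈ U
      · rw [bp_inr_mem _ _ _ _ h]
        simp only [Equiv.trans_apply, Equiv.subtypeEquivRight_apply,
          Equiv.subtypeEquivRight_symm_apply, crossR, Equiv.coe_fn_mk]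
        exact Sum.inl_getLeft _ _
      · rw [bp_inr_nmem _ _ _ _ h]
        simp only [Equiv.trans_apply, Equiv.subtypeEquivRight_apply,
          Equiv.subtypeEquivRight_symm_apply, stayR, Equiv.coe_fn_mk]
        exact Sum.inr_getRight _ _
  · rintro ⟨a, b, c, d⟩ -
    rw [Fintype.prod_sum_type]
    have hS1 : ∏ i ∈ S, (fromBlocks A' B C A'') (Sum.inl i) ((bp S T U V a b c d) (Sum.inl i))
        = ∏ i : {i // i ∈ S}, B i.1 (a i).1 := by
      rw [← Finset.prod_coe_sort S
        (fun i => (fromBlocks A' B C A'') (Sum.inl i) ((bp S T U V a b c d) (Sum.inl i)))]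
      refine Finset.prod_congr rfl fun i _ => ?_
      rw [bp_inl_mem _ _ _ _ i.2]
      simp [Matrix.fromBlocks_apply₁₂]
    have hS2 : ∏ i ∈ Sᶜ, (fromBlocks A' B C A'') (Sum.inl i) ((bp S T U V a b c d) (Sum.inl i))
        = ∏ i : {i // i ∈ Sᶜ}, A' i.1 (c i).1 := by
      rw [← Finset.prod_coe_sort Sᶜ
        (fun i => (fromBlocks A' B C A'') (Sum.inl i) ((bp S T U V a b c d) (Sum.inl i)))]
      refine Finset.prod_congr rfl fun i _ => ?_
      rw [bp_inl_nmem _ _ _ _ (Finset.mem_compl.mp i.2)]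
      simp [Matrix.fromBlocks_apply₁₁]
    have hU1 : ∏ j ∈ U, (fromBlocks A' B C A'') (Sum.inr j) ((bp S T U V a b c d) (Sum.inr j))
        = ∏ j : {j // j ∈ U}, C j.1 (b j).1 := by
      rw [← Finset.prod_coe_sort U
        (fun j => (fromBlocks A' B C A'') (Sum.inr j) ((bp S T U V a b c d) (Sum.inr j)))]
      refine Finset.prod_congr rfl fun j _ => ?_
      rw [bp_inr_mem _ _ _ _ j.2]
      simp [Matrix.fromBlocks_apply₂₁]
    have hU2 : ∏ j ∈ Uᶜ, (fromBlocks A' B C A'') (Sum.inr j) ((bp S T U V a b c d) (Sum.inr j))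
        = ∏ j : {j // j ∈ Uᶜ}, A'' j.1 (d j).1 := by
      rw [← Finset.prod_coe_sort Uᶜ
        (fun j => (fromBlocks A' B C A'') (Sum.inr j) ((bp S T U V a b c d) (Sum.inr j)))]
      refine Finset.prod_congr rfl fun j _ => ?_
      rw [bp_inr_nmem _ _ _ _ (Finset.mem_compl.mp j.2)]
      simp [Matrix.fromBlocks_apply₂₂]
    rw [← Finset.prod_mul_prod_compl S
      (fun i => (fromBlocks A' B C A'') (Sum.inl i) ((bp S T U V a b c d) (Sum.inl i))),
      ← Finset.prod_mul_prod_compl U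
      (fun j => (fromBlocks A' B C A'') (Sum.inr j) ((bp S T U V a b c d) (Sum.inr j))),
      hS1, hS2, hU1, hU2]
    ring

noncomputable def f1 (B : Matrix ι₁ ι₂ ℂ) (S : Finset ι₁) (T : Finset ι₂) : ℂ :=
  ∑ e : {i // i ∈ S} ≃ {j // j ∈ T}, ∏ i, B i.1 (e i).1

noncomputable def f3 (A' : Matrix ι₁ ι₁ ℂ) (S V : Finset ι₁) : ℂ :=
  ∑ e : {i // i ∈ Sᶜ} ≃ {i // i ∈ Vᶜ}, ∏ i, A' i.1 (e i).1

noncomputable def f4 (A'' : Matrix ι₂ ι₂ ℂ) (U T : Finset ι₂) : ℂ :=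
  ∑ e : {j // j ∈ Uᶜ} ≃ {j // j ∈ Tᶜ}, ∏ j, A'' j.1 (e j).1

lemma conj_sum_equiv {α β : Type} [Fintype α] [Fintype β] [DecidableEq α] [DecidableEq β]
    (F : α → β → ℂ) :
    (starRingEnd ℂ) (∑ e : α ≃ β, ∏ x, F x (e x))
      = ∑ e : β ≃ α, ∏ y, (starRingEnd ℂ) (F (e y) y) := by
  rw [_root_.map_sum]
  refine Fintype.sum_bijective Equiv.symm Equiv.symm_bijective _ _ fun e => ?_
  rw [_root_.map_prod]
  calc ∏ x : α, (starRingEnd ℂ) (F x (e x))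
      = ∏ x : α, (fun y : β => (starRingEnd ℂ) (F (e.symm y) y)) (e x) :=
        Finset.prod_congr rfl fun x _ => by simp
    _ = ∏ y : β, (starRingEnd ℂ) (F (e.symm y) y) :=
        Equiv.prod_comp e (fun y : β => (starRingEnd ℂ) (F (e.symm y) y))

lemma sum_equiv_genPer {α β ρ : Type} [Fintype α] [Fintype β] [Fintype ρ]
    [DecidableEq α] [DecidableEq β] [DecidableEq ρ] (u : ρ ≃ α) (v : ρ ≃ β) (f : α → β → ℂ) :
    (∑ e : α ≃ β, ∏ x, f x (e x)) = ∑ π : Equiv.Perm ρ, ∏ t, f (u t) (v (π t)) := by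
  refine (Fintype.sum_equiv (u.equivCongr v) _ _ fun π => ?_).symm
  calc ∏ t, f (u t) (v (π t))
      = ∏ t, (fun x => f x ((u.equivCongr v π) x)) (u t) :=
        Finset.prod_congr rfl fun t _ => by simp [Equiv.equivCongr]
    _ = _ := Equiv.prod_comp u (fun x => f x ((u.equivCongr v π) x))

lemma sum_equiv_zero {α β : Type} [Fintype α] [Fintype β] [DecidableEq α] [DecidableEq β]
    (h : Fintype.card α ≠ Fintype.card β) (f : (α ≃ β) → ℂ) : ∑ e : α ≃ β, f e = 0 := by
  haveI : IsEmpty (α ≃ β) := ⟨fun e => h (Fintype.card_congr e)⟩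
  simp

lemma f1_card {B : Matrix ι₁ ι₂ ℂ} {S : Finset ι₁} {T : Finset ι₂} (h : S.card ≠ T.card) :
    f1 B S T = 0 :=
  sum_equiv_zero (by simpa [Fintype.card_coe] using h) _

lemma f3_card {A' : Matrix ι₁ ι₁ ℂ} {S V : Finset ι₁} (h : S.card ≠ V.card) : f3 A' S V = 0 := by
  refine sum_equiv_zero ?_ _
  have h1 : S.card ≤ Fintype.card ι₁ := by
    simpa using Finset.card_le_univ S
  have h2 : V.card ≤ Fintype.card ι₁ := by
    simpa using Finset.card_le_univ V
  simp only [Fintype.card_coe, Finset.card_compl, Finset.card_univ]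
  omega

lemma f4_card {A'' : Matrix ι₂ ι₂ ℂ} {U T : Finset ι₂} (h : U.card ≠ T.card) : f4 A'' U T = 0 := by
  refine sum_equiv_zero ?_ _
  have h1 : U.card ≤ Fintype.card ι₂ := by
    simpa using Finset.card_le_univ U
  have h2 : T.card ≤ Fintype.card ι₂ := by
    simpa using Finset.card_le_univ T
  simp only [Fintype.card_coe, Finset.card_compl, Finset.card_univ]
  omega

lemma f1_indep {S : Finset ι₁} (h : S.card = 0) (B B' : Matrix ι₁ ι₂ ℂ) (T : Finset ι₂) :
    f1 B S T = f1 B' S T := by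
  haveI : IsEmpty {i // i ∈ S} :=
    ⟨fun i => absurd i.2 (by simp [Finset.card_eq_zero.mp h])⟩
  rw [f1, f1]
  refine Finset.sum_congr rfl fun e _ => ?_
  rw [Finset.univ_eq_empty, Finset.prod_empty, Finset.prod_empty]

lemma f1_zero {S : Finset ι₁} (h : S.Nonempty) (T : Finset ι₂) :
    f1 (0 : Matrix ι₁ ι₂ ℂ) S T = 0 := by
  obtain ⟨i, hi⟩ := h
  refine Finset.sum_eq_zero fun e _ => ?_
  exact Finset.prod_eq_zero (Finset.mem_univ (⟨i, hi⟩ : {i // i ∈ S})) rfl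

def PP (r : ℕ) : Finset (Finset ι₁ × Finset ι₂) :=
  univ.filter (fun p => p.1.card = r ∧ p.2.card = r)

lemma decomp (A' : Matrix ι₁ ι₁ ℂ) (B : Matrix ι₁ ι₂ ℂ) (A'' : Matrix ι₂ ι₂ ℂ) :
    perm (fromBlocks A' B Bᴴ A'') =
      ∑ r ∈ Finset.range (Fintype.card ι₁ + 1), ∑ p ∈ PP r, ∑ q ∈ PP r,
        f1 B p.1 p.2 * (starRingEnd ℂ) (f1 B q.1 q.2) * f3 A' p.1 q.1 * f4 A'' q.2 p.2 := by
  have hstep : ∀ d : Finset ι₁ × Finset ι₂ × Finset ι₂ × Finset ι₁,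
      ∑ σ ∈ univ.filter (fun σ : Equiv.Perm (ι₁ ⊕ ι₂) => invt σ = d),
          ∏ x, (fromBlocks A' B Bᴴ A'') x (σ x)
        = f1 B d.1 d.2.1 * (starRingEnd ℂ) (f1 B d.2.2.2 d.2.2.1) * f3 A' d.1 d.2.2.2
            * f4 A'' d.2.2.1 d.2.1 := by
    rintro ⟨S, T, U, V⟩
    rw [fiber_eq A' B Bᴴ A'' S T U V]
    have h2 : (∑ e : {j // j ∈ U} ≃ {i // i ∈ V}, ∏ j, Bᴴ j.1 (e j).1)
        = (starRingEnd ℂ) (f1 B V U) := by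
      rw [f1, conj_sum_equiv (fun (i : {i // i ∈ V}) (j : {j // j ∈ U}) => B i.1 j.1)]
      exact Finset.sum_congr rfl fun e _ => Finset.prod_congr rfl fun j _ => by
        simp [Matrix.conjTranspose_apply]
    rw [h2]
    simp only [f1, f3, f4]
  have regroup : ∀ X : Finset ι₁ → Finset ι₂ → Finset ι₂ → Finset ι₁ → ℂ,
      (∑ d : Finset ι₁ × Finset ι₂ × Finset ι₂ × Finset ι₁, X d.1 d.2.1 d.2.2.1 d.2.2.2)
      = ∑ p : Finset ι₁ × Finset ι₂, ∑ q : Finset ι₁ × Finset ι₂, X p.1 p.2 q.2 q.1 := by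
    intro X
    have expand4 : (∑ d : Finset ι₁ × Finset ι₂ × Finset ι₂ × Finset ι₁,
        X d.1 d.2.1 d.2.2.1 d.2.2.2)
        = ∑ S : Finset ι₁, ∑ T : Finset ι₂, ∑ U : Finset ι₂, ∑ V : Finset ι₁, X S T U V := by
      rw [Fintype.sum_prod_type]
      refine Finset.sum_congr rfl fun S _ => ?_
      rw [Fintype.sum_prod_type]
      refine Finset.sum_congr rfl fun T _ => ?_
      rw [Fintype.sum_prod_type]
    have expand2 : (∑ p : Finset ι₁ × Finset ι₂, ∑ q : Finset ι₁ × Finset ι₂,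
        X p.1 p.2 q.2 q.1)
        = ∑ S : Finset ι₁, ∑ T : Finset ι₂, ∑ V : Finset ι₁, ∑ U : Finset ι₂, X S T U V := by
      rw [Fintype.sum_prod_type]
      refine Finset.sum_congr rfl fun S _ => ?_
      refine Finset.sum_congr rfl fun T _ => ?_
      rw [Fintype.sum_prod_type]
    rw [expand4, expand2]
    refine Finset.sum_congr rfl fun S _ => Finset.sum_congr rfl fun T _ => ?_
    exact Finset.sum_comm
  have step1 : perm (fromBlocks A' B Bᴴ A'') =
      ∑ p : Finset ι₁ × Finset ι₂, ∑ q : Finset ι₁ × Finset ι₂,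
        f1 B p.1 p.2 * (starRingEnd ℂ) (f1 B q.1 q.2) * f3 A' p.1 q.1 * f4 A'' q.2 p.2 := by
    rw [perm, ← Finset.sum_fiberwise_of_maps_to
      (g := invt) (t := (univ : Finset (Finset ι₁ × Finset ι₂ × Finset ι₂ × Finset ι₁)))
      (fun σ _ => Finset.mem_univ _)]
    simp_rw [hstep]
    exact regroup (fun S T U V =>
      f1 B S T * (starRingEnd ℂ) (f1 B V U) * f3 A' S V * f4 A'' U T)
  rw [step1]
  have hz : (∑ z : (Finset ι₁ × Finset ι₂) × (Finset ι₁ × Finset ι₂),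
      f1 B z.1.1 z.1.2 * (starRingEnd ℂ) (f1 B z.2.1 z.2.2) * f3 A' z.1.1 z.2.1
        * f4 A'' z.2.2 z.1.2)
      = ∑ p : Finset ι₁ × Finset ι₂, ∑ q : Finset ι₁ × Finset ι₂,
        f1 B p.1 p.2 * (starRingEnd ℂ) (f1 B q.1 q.2) * f3 A' p.1 q.1 * f4 A'' q.2 p.2 :=
    Fintype.sum_prod_type _
  rw [← hz]
  rw [← Finset.sum_fiberwise_of_maps_to
    (g := fun z : (Finset ι₁ × Finset ι₂) × (Finset ι₁ × Finset ι₂) => z.1.1.card)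
    (t := Finset.range (Fintype.card ι₁ + 1))
    (fun z _ => Finset.mem_range_succ_iff.mpr (by simpa using Finset.card_le_univ z.1.1))]
  refine Finset.sum_congr rfl fun r hr => ?_
  have hprod : ∑ z ∈ PP r ×ˢ PP r,
      (f1 B z.1.1 z.1.2 * (starRingEnd ℂ) (f1 B z.2.1 z.2.2) * f3 A' z.1.1 z.2.1
        * f4 A'' z.2.2 z.1.2)
      = ∑ p ∈ PP r, ∑ q ∈ PP r,
        f1 B p.1 p.2 * (starRingEnd ℂ) (f1 B q.1 q.2) * f3 A' p.1 q.1 * f4 A'' q.2 p.2 :=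
    Finset.sum_product _ _ _
  rw [← hprod]
  refine (Finset.sum_subset ?_ ?_).symm
  · intro z hz'
    simp only [PP, Finset.mem_product, Finset.mem_filter, Finset.mem_univ, true_and] at hz'
    simp [hz'.1.1]
  · intro z hz' hnz
    simp only [Finset.mem_filter, Finset.mem_univ, true_and] at hz'
    by_cases c1 : z.1.2.card = r
    · by_cases c3 : z.2.1.card = r
      · by_cases c4 : z.2.2.card = r
        · exact absurd (by
            simp only [PP, Finset.mem_product, Finset.mem_filter, Finset.mem_univ, true_and]
            exact ⟨⟨hz', c1⟩, ⟨c3, c4⟩⟩) hnz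
        · rw [f4_card (by omega)]
          simp
      · rw [f3_card (show z.1.1.card ≠ z.2.1.card by omega)]
        simp
    · rw [f1_card (show z.1.1.card ≠ z.1.2.card by omega)]
      simp

lemma Qpos (A' : Matrix ι₁ ι₁ ℂ) (A'' : Matrix ι₂ ι₂ ℂ)
    (h1 : A'.PosSemidef) (h2 : A''.PosSemidef) (B' : Matrix ι₁ ι₂ ℂ) (r : ℕ) :
    0 ≤ ∑ p ∈ PP r, ∑ q ∈ PP r,
      f1 B' p.1 p.2 * (starRingEnd ℂ) (f1 B' q.1 q.2) * f3 A' p.1 q.1 * f4 A'' q.2 p.2 := by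
  classical
  have hcard1 : ∀ p : {x // x ∈ PP (ι₁ := ι₁) (ι₂ := ι₂) r},
      ((p.1.1)ᶜ : Finset ι₁).card = Fintype.card ι₁ - r := by
    intro p
    have := p.2
    simp only [PP, Finset.mem_filter, Finset.mem_univ, true_and] at this
    rw [Finset.card_compl, this.1]
  have hcard2 : ∀ p : {x // x ∈ PP (ι₁ := ι₁) (ι₂ := ι₂) r},
      ((p.1.2)ᶜ : Finset ι₂).card = Fintype.card ι₂ - r := by
    intro p
    have := p.2
    simp only [PP, Finset.mem_filter, Finset.mem_univ, true_and] at this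
    rw [Finset.card_compl, this.2]
  set aE : ∀ p : {x // x ∈ PP (ι₁ := ι₁) (ι₂ := ι₂) r},
      Fin (Fintype.card ι₁ - r) ≃ {i // i ∈ (p.1.1)ᶜ} :=
    fun p => (((p.1.1)ᶜ.equivFin).trans (finCongr (hcard1 p))).symm with haE
  set bE : ∀ p : {x // x ∈ PP (ι₁ := ι₁) (ι₂ := ι₂) r},
      Fin (Fintype.card ι₂ - r) ≃ {j // j ∈ (p.1.2)ᶜ} :=
    fun p => (((p.1.2)ᶜ.equivFin).trans (finCongr (hcard2 p))).symm with hbE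
  have hherm : ∀ i j, (starRingEnd ℂ) (A'' i j) = A'' j i := by
    intro i j
    rw [show (starRingEnd ℂ) (A'' i j) = A''ᴴ j i from rfl, h2.1]
  have hmain : ∀ p q : {x // x ∈ PP (ι₁ := ι₁) (ι₂ := ι₂) r},
      f1 B' p.1.1 p.1.2 * (starRingEnd ℂ) (f1 B' q.1.1 q.1.2) * f3 A' p.1.1 q.1.1
          * f4 A'' q.1.2 p.1.2
        = (fun p : {x // x ∈ PP (ι₁ := ι₁) (ι₂ := ι₂) r} => f1 B' p.1.1 p.1.2) p
          * (starRingEnd ℂ) ((fun p : {x // x ∈ PP (ι₁ := ι₁) (ι₂ := ι₂) r} =>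
              f1 B' p.1.1 p.1.2) q)
          * genPer A' (fun t => ((aE p) t).1) (fun t => ((aE q) t).1)
          * (starRingEnd ℂ) (genPer A'' (fun t => ((bE p) t).1) (fun t => ((bE q) t).1)) := by
    intro p q
    have h3 : f3 A' p.1.1 q.1.1
        = genPer A' (fun t => ((aE p) t).1) (fun t => ((aE q) t).1) := by
      rw [f3, sum_equiv_genPer (aE p) (aE q)
        (fun (i : {i // i ∈ (p.1.1)ᶜ}) (j : {i // i ∈ (q.1.1)ᶜ}) => A' i.1 j.1), genPer]
    have h4 : f4 A'' q.1.2 p.1.2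
        = (starRingEnd ℂ) (genPer A'' (fun t => ((bE p) t).1) (fun t => ((bE q) t).1)) := by
      rw [genPer, ← sum_equiv_genPer (bE p) (bE q)
        (fun (i : {j // j ∈ (p.1.2)ᶜ}) (j : {j // j ∈ (q.1.2)ᶜ}) => A'' i.1 j.1),
        conj_sum_equiv (fun (i : {j // j ∈ (p.1.2)ᶜ}) (j : {j // j ∈ (q.1.2)ᶜ}) => A'' i.1 j.1),
        f4]
      refine Finset.sum_congr rfl fun e _ => Finset.prod_congr rfl fun y _ => ?_
      rw [hherm]
    rw [h3, h4]
  calc (0:ℂ) ≤ ∑ p : {x // x ∈ PP (ι₁ := ι₁) (ι₂ := ι₂) r},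
        ∑ q : {x // x ∈ PP (ι₁ := ι₁) (ι₂ := ι₂) r},
        (fun p : {x // x ∈ PP (ι₁ := ι₁) (ι₂ := ι₂) r} => f1 B' p.1.1 p.1.2) p
          * (starRingEnd ℂ) ((fun p : {x // x ∈ PP (ι₁ := ι₁) (ι₂ := ι₂) r} =>
              f1 B' p.1.1 p.1.2) q)
          * genPer A' (fun t => ((aE p) t).1) (fun t => ((aE q) t).1)
          * (starRingEnd ℂ) (genPer A'' (fun t => ((bE p) t).1) (fun t => ((bE q) t).1)) :=
      lpos h1 h2 _ _ _
    _ = ∑ p : {x // x ∈ PP (ι₁ := ι₁) (ι₂ := ι₂) r},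
        ∑ q : {x // x ∈ PP (ι₁ := ι₁) (ι₂ := ι₂) r},
        f1 B' p.1.1 p.1.2 * (starRingEnd ℂ) (f1 B' q.1.1 q.1.2) * f3 A' p.1.1 q.1.1
          * f4 A'' q.1.2 p.1.2 :=
      Finset.sum_congr rfl fun p _ => Finset.sum_congr rfl fun q _ => (hmain p q).symm
    _ = ∑ p ∈ PP r, ∑ q ∈ PP r,
        f1 B' p.1 p.2 * (starRingEnd ℂ) (f1 B' q.1 q.2) * f3 A' p.1 q.1 * f4 A'' q.2 p.2 := by
      rw [← Finset.sum_coe_sort (PP r) (fun p => ∑ q ∈ PP r,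
        f1 B' p.1 p.2 * (starRingEnd ℂ) (f1 B' q.1 q.2) * f3 A' p.1 q.1 * f4 A'' q.2 p.2)]
      exact Finset.sum_congr rfl fun p _ => (Finset.sum_coe_sort (PP r) (fun q =>
        f1 B' p.1.1 p.1.2 * (starRingEnd ℂ) (f1 B' q.1 q.2) * f3 A' p.1.1 q.1
          * f4 A'' q.2 p.1.2))

lemma lieb (A' : Matrix ι₁ ι₁ ℂ) (B : Matrix ι₁ ι₂ ℂ) (A'' : Matrix ι₂ ι₂ ℂ)
    (h1 : A'.PosSemidef) (h2 : A''.PosSemidef) :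
    0 ≤ perm (fromBlocks A' 0 0 A'') ∧
      perm (fromBlocks A' 0 0 A'') ≤ perm (fromBlocks A' B Bᴴ A'') := by
  have hdecB := decomp A' B A''
  have hdec0 := decomp A' 0 A''
  rw [conjTranspose_zero] at hdec0
  constructor
  · rw [hdec0]
    exact Finset.sum_nonneg fun r _ => Qpos A' A'' h1 h2 0 r
  · rw [hdec0, hdecB]
    refine Finset.sum_le_sum fun r _ => ?_
    rcases Nat.eq_zero_or_pos r with hr | hr
    · subst hr
      refine le_of_eq (Finset.sum_congr rfl fun p hp => Finset.sum_congr rfl fun q hq => ?_)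
      simp only [PP, Finset.mem_filter, Finset.mem_univ, true_and] at hp hq
      rw [f1_indep hp.1 0 B, f1_indep hq.1 0 B]
    · have hzero : ∑ p ∈ PP (ι₁ := ι₁) (ι₂ := ι₂) r, ∑ q ∈ PP r,
          f1 (0 : Matrix ι₁ ι₂ ℂ) p.1 p.2 * (starRingEnd ℂ) (f1 (0 : Matrix ι₁ ι₂ ℂ) q.1 q.2)
            * f3 A' p.1 q.1 * f4 A'' q.2 p.2 = 0 := by
        refine Finset.sum_eq_zero fun p hp => Finset.sum_eq_zero fun q hq => ?_
        simp only [PP, Finset.mem_filter, Finset.mem_univ, true_and] at hp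
        have hne : p.1.Nonempty := Finset.card_pos.mp (by omega)
        rw [f1_zero hne]
        simp
      rw [hzero]
      exact Qpos A' A'' h1 h2 B r

lemma perm_reindex {α β : Type} [Fintype α] [Fintype β] [DecidableEq α] [DecidableEq β]
    (e : α ≃ β) (M : Matrix β β ℂ) : perm (M.submatrix e e) = perm M := by
  rw [perm, perm]
  refine Fintype.sum_equiv (Equiv.permCongr e) _ _ fun σ => ?_
  calc ∏ a, (M.submatrix e e) a (σ a)
      = ∏ a, (fun b => M b ((e.permCongr σ) b)) (e a) := by
        refine Finset.prod_congr rfl fun a _ => ?_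
        simp [Matrix.submatrix_apply, Equiv.permCongr_apply]
    _ = _ := Equiv.prod_comp e (fun b => M b ((e.permCongr σ) b))

def submEquiv (I : Finset (ι₁ ⊕ ι₂)) :
    ({i : ι₁ // Sum.inl i ∈ I} ⊕ {j : ι₂ // Sum.inr j ∈ I}) ≃ {x // x ∈ I} where
  toFun x := match x with
    | Sum.inl i => ⟨Sum.inl i.1, i.2⟩
    | Sum.inr j => ⟨Sum.inr j.1, j.2⟩
  invFun x := match x with
    | ⟨Sum.inl i, h⟩ => Sum.inl ⟨i, h⟩
    | ⟨Sum.inr j, h⟩ => Sum.inr ⟨j, h⟩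
  left_inv x := by rcases x with ⟨i, hi⟩ | ⟨j, hj⟩ <;> rfl
  right_inv x := by rcases x with ⟨i | j, h⟩ <;> rfl

lemma subm_transport (A' : Matrix ι₁ ι₁ ℂ) (B : Matrix ι₁ ι₂ ℂ) (C : Matrix ι₂ ι₁ ℂ)
    (A'' : Matrix ι₂ ι₂ ℂ) (I : Finset (ι₁ ⊕ ι₂)) :
    (subm (fromBlocks A' B C A'') I).submatrix (submEquiv I) (submEquiv I)
      = fromBlocks (A'.submatrix Subtype.val Subtype.val) (B.submatrix Subtype.val Subtype.val)
          (C.submatrix Subtype.val Subtype.val) (A''.submatrix Subtype.val Subtype.val) := by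
  ext x y
  rcases x with i | j <;> rcases y with i' | j' <;> rfl

lemma subm_ineq (A' : Matrix ι₁ ι₁ ℂ) (B : Matrix ι₁ ι₂ ℂ) (A'' : Matrix ι₂ ι₂ ℂ)
    (h1 : A'.PosSemidef) (h2 : A''.PosSemidef) (I : Finset (ι₁ ⊕ ι₂)) :
    0 ≤ perm (subm (fromBlocks A' 0 0 A'') I) ∧
      perm (subm (fromBlocks A' 0 0 A'') I) ≤ perm (subm (fromBlocks A' B Bᴴ A'') I) := by
  have hz1 : (0 : Matrix ι₁ ι₂ ℂ).submatrix (Subtype.val : {i : ι₁ // Sum.inl i ∈ I} → ι₁)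
      (Subtype.val : {j : ι₂ // Sum.inr j ∈ I} → ι₂) = 0 := rfl
  have hz2 : (0 : Matrix ι₂ ι₁ ℂ).submatrix (Subtype.val : {j : ι₂ // Sum.inr j ∈ I} → ι₂)
      (Subtype.val : {i : ι₁ // Sum.inl i ∈ I} → ι₁) = 0 := rfl
  have hBt : Bᴴ.submatrix (Subtype.val : {j : ι₂ // Sum.inr j ∈ I} → ι₂)
      (Subtype.val : {i : ι₁ // Sum.inl i ∈ I} → ι₁)
      = (B.submatrix (Subtype.val : {i : ι₁ // Sum.inl i ∈ I} → ι₁)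
          (Subtype.val : {j : ι₂ // Sum.inr j ∈ I} → ι₂))ᴴ := by
    ext i j
    simp [Matrix.conjTranspose_apply]
  rw [← perm_reindex (submEquiv I) (subm (fromBlocks A' 0 0 A'') I),
    ← perm_reindex (submEquiv I) (subm (fromBlocks A' B Bᴴ A'') I),
    subm_transport, subm_transport, hz1, hz2, hBt]
  exact lieb _ _ _ (h1.submatrix _) (h2.submatrix _)

end L11

/-- `per(A, k) ≥ per(D, k)` where `D` is obtained from the p.s.d. Hermitian block
matrix `A = [[A', B], [Bᴴ, A'']]` by zeroing the off-diagonal blocks. -/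
theorem stmt11 (m l k : ℕ)
    (A' : Matrix (Fin m) (Fin m) ℂ) (B : Matrix (Fin m) (Fin l) ℂ)
    (A'' : Matrix (Fin l) (Fin l) ℂ)
    (hA : (Matrix.fromBlocks A' B Bᴴ A'').PosSemidef)
    (hD : (Matrix.fromBlocks A' 0 0 A'').PosSemidef) :
    (permPart (Matrix.fromBlocks A' B Bᴴ A'') k).re ≥
      (permPart (Matrix.fromBlocks A' 0 0 A'') k).re := by
  have hA' : A'.PosSemidef := by
    have h := hD.submatrix (Sum.inl : Fin m → Fin m ⊕ Fin l)
    have he : (Matrix.fromBlocks A' 0 0 A'').submatrix (Sum.inl : Fin m → Fin m ⊕ Fin l)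
        Sum.inl = A' := by
      ext i j; rfl
    rwa [he] at h
  have hA'' : A''.PosSemidef := by
    have h := hD.submatrix (Sum.inr : Fin l → Fin m ⊕ Fin l)
    have he : (Matrix.fromBlocks A' 0 0 A'').submatrix (Sum.inr : Fin l → Fin m ⊕ Fin l)
        Sum.inr = A'' := by
      ext i j; rfl
    rwa [he] at h
  have key : permPart (Matrix.fromBlocks A' 0 0 A'') k
      ≤ permPart (Matrix.fromBlocks A' B Bᴴ A'') k := by
    rw [permPart, permPart]
    refine Finset.sum_le_sum fun f _ => ?_
    exact Finset.prod_le_prod (fun j _ => (L11.subm_ineq A' B A'' hA' hA'' _).1)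
      (fun j _ => (L11.subm_ineq A' B A'' hA' hA'' _).2)
  exact (Complex.le_def.mp key).1
end

section
/- If A and D are positive semi-definite Hermitian n×n matrices where D is obtained from A by zeroing the off-diagonal blocks (A = [[A',B],[B*,A'']], D = [[A',0],[0,A'']]), then for every k, det(A,k) ≤ det(D,k), where det(M,k) = Σ_{(I_1,…,I_k)} Π_j det(M[I_j]) over ordered partitions of {1,…,n} into k nonempty subsets. -/
open Finset Matrix
open scoped ComplexOrder

namespace Stmt12Aux

variable {ι : Type*} [Fintype ι] [DecidableEq ι]

lemma psd_det_nonneg {M : Matrix ι ι ℂ} (hM : M.PosSemidef) : 0 ≤ M.det := by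
  exact hM.det_nonneg

lemma det_one_add {Z : Matrix ι ι ℂ} (hZ : Z.PosSemidef) : 1 ≤ (1 + Z).det := by
  set U : Matrix ι ι ℂ := (hZ.1.eigenvectorUnitary : Matrix ι ι ℂ) with hU
  set d : ι → ℂ := (↑) ∘ hZ.1.eigenvalues with hd
  have hu : U * star U = 1 := Matrix.mem_unitaryGroup_iff.mp hZ.1.eigenvectorUnitary.2
  have h1 : 1 + Z = U * (1 + Matrix.diagonal d) * star U := by
    have e : U * (1 + Matrix.diagonal d) * star U
        = U * star U + U * Matrix.diagonal d * star U := by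
      rw [mul_add, mul_one, add_mul]
    rw [e, hu]
    congr 1
    exact hZ.1.spectral_theorem
  have h2 : (1 + Z).det = (1 + Matrix.diagonal d).det := by
    rw [h1, Matrix.det_mul, Matrix.det_mul]
    have : U.det * (1 + Matrix.diagonal d).det * (star U).det
        = (U * star U).det * (1 + Matrix.diagonal d).det := by
      rw [Matrix.det_mul]; ring
    rw [this, hu, Matrix.det_one, one_mul]
  rw [h2, ← Matrix.diagonal_one, Matrix.diagonal_add, Matrix.det_diagonal]
  have h3 : ∏ i, (1 + d i) = ((∏ i, (1 + hZ.1.eigenvalues i) : ℝ) : ℂ) := by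
    push_cast
    exact Finset.prod_congr rfl fun i _ => rfl
  rw [h3, show (1 : ℂ) = ((1 : ℝ) : ℂ) by norm_num, Complex.real_le_real]
  calc (1:ℝ) = ∏ _i : ι, 1 := by simp
    _ ≤ ∏ i, (1 + hZ.1.eigenvalues i) :=
        Finset.prod_le_prod (fun _ _ => zero_le_one)
          (fun i _ => by linarith [hZ.eigenvalues_nonneg i])

lemma det_le_det_add {X Y : Matrix ι ι ℂ} (hX : X.PosSemidef) (hY : Y.PosSemidef) :
    X.det ≤ (X + Y).det := by
  by_cases hdX : X.det = 0
  · rw [hdX]; exact psd_det_nonneg (hX.add hY)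
  · set R := (open scoped MatrixOrder in CFC.sqrt X) with hRdef
    have hR : R.PosSemidef := by open scoped MatrixOrder in exact (CFC.sqrt_nonneg X).posSemidef
    have hRR : R * R = X := by open scoped MatrixOrder in exact CFC.sqrt_mul_sqrt_self X hX.nonneg
    have hdR : IsUnit R.det := by
      rw [isUnit_iff_ne_zero]
      intro h
      exact hdX (by rw [← hRR, Matrix.det_mul, h, mul_zero])
    have hRH : (R⁻¹)ᴴ = R⁻¹ := hR.1.inv
    have hZ : (R⁻¹ * Y * R⁻¹).PosSemidef := by
      have := hY.mul_mul_conjTranspose_same R⁻¹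
      rwa [hRH] at this
    have key : X + Y = R * (1 + R⁻¹ * Y * R⁻¹) * R := by
      rw [mul_add, mul_one, add_mul, hRR]
      congr 1
      have : R * (R⁻¹ * Y * R⁻¹) * R = R * R⁻¹ * Y * (R⁻¹ * R) := by
        simp only [mul_assoc]
      rw [this, Matrix.mul_nonsing_inv _ hdR, Matrix.nonsing_inv_mul _ hdR, one_mul, mul_one]
    have h1 : 1 ≤ (1 + R⁻¹ * Y * R⁻¹).det := det_one_add hZ
    have ha : 0 ≤ R.det := psd_det_nonneg hR
    calc X.det = R.det * R.det * 1 := by rw [mul_one, ← Matrix.det_mul, hRR]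
      _ ≤ R.det * R.det * (1 + R⁻¹ * Y * R⁻¹).det :=
          mul_le_mul_of_nonneg_left h1 (mul_nonneg ha ha)
      _ = (X + Y).det := by rw [key, Matrix.det_mul, Matrix.det_mul]; ring

lemma fischer_blocks {m' n' : Type*} [Fintype m'] [Fintype n'] [DecidableEq m'] [DecidableEq n']
    {A : Matrix m' m' ℂ} {B : Matrix m' n' ℂ} {D : Matrix n' n' ℂ}
    (h : (Matrix.fromBlocks A B Bᴴ D).PosSemidef) :
    (Matrix.fromBlocks A B Bᴴ D).det ≤ A.det * D.det := by
  have hA : A.PosSemidef := by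
    have h' := h.submatrix Sum.inl
    have e : (Matrix.fromBlocks A B Bᴴ D).submatrix Sum.inl Sum.inl = A := by ext i j; rfl
    rwa [e] at h'
  by_cases hdA : A.det = 0
  · obtain ⟨x, hx0, hAx⟩ := Matrix.exists_mulVec_eq_zero_iff.mpr hdA
    set v : m' ⊕ n' → ℂ := Sum.elim x 0 with hv
    have hq : star v ⬝ᵥ (Matrix.fromBlocks A B Bᴴ D) *ᵥ v = 0 := by
      rw [hv]
      rw [show (star (Sum.elim x (0 : n' → ℂ))) = Sum.elim (star x) 0 by
        funext i; cases i <;> simp]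
      rw [Matrix.fromBlocks_mulVec]
      simp [dotProduct, Fintype.sum_sum_type, hAx]
    have hMv : (Matrix.fromBlocks A B Bᴴ D) *ᵥ v = 0 :=
      (h.dotProduct_mulVec_zero_iff v).mp hq
    have hdet0 : (Matrix.fromBlocks A B Bᴴ D).det = 0 := by
      apply Matrix.exists_mulVec_eq_zero_iff.mp
      refine ⟨v, ?_, hMv⟩
      intro h0
      apply hx0
      funext i
      have := congrFun h0 (Sum.inl i)
      simpa [hv] using this
    rw [hdet0, hdA, zero_mul]
  · have hApd : A.PosDef := by
      refine .of_dotProduct_mulVec_pos hA.1 fun x hx => lt_of_le_of_ne (hA.dotProduct_mulVec_nonneg x) fun hzero => ?_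
      have hAx := (hA.dotProduct_mulVec_zero_iff x).mp hzero.symm
      exact hdA (Matrix.exists_mulVec_eq_zero_iff.mp ⟨x, hx, hAx⟩)
    haveI : Invertible A := hApd.isUnit.invertible
    rw [Matrix.det_fromBlocks₁₁, invOf_eq_nonsing_inv]
    have hS : (D - Bᴴ * A⁻¹ * B).PosSemidef := (Matrix.PosDef.fromBlocks₁₁ B D hApd).mp h
    have hT : (Bᴴ * A⁻¹ * B).PosSemidef :=
      (hApd.inv.posSemidef).conjTranspose_mul_mul_same B
    have hle := det_le_det_add hS hT
    rw [sub_add_cancel] at hle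
    exact mul_le_mul_of_nonneg_left hle (psd_det_nonneg hA)

lemma fischer_pred {M : Matrix ι ι ℂ} (hM : M.PosSemidef) (p : ι → Prop) [DecidablePred p] :
    M.det ≤ (M.toSquareBlockProp p).det * (M.toSquareBlockProp fun i => ¬p i).det := by
  set e := Equiv.sumCompl p with he
  set Y : Matrix {a // p a} {a // ¬p a} ℂ := fun i j => M i j with hY
  have hblocks : M.submatrix e e
      = Matrix.fromBlocks (M.toSquareBlockProp p) Y Yᴴ (M.toSquareBlockProp fun i => ¬p i) := by
    ext i j
    cases i with
    | inl i =>
      cases j with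
      | inl j => rfl
      | inr j => rfl
    | inr i =>
      cases j with
      | inl j =>
        show M i j = star (M j i)
        conv_lhs => rw [← hM.1]
        rfl
      | inr j => rfl
  have hsub := hM.submatrix ⇑e
  rw [hblocks] at hsub
  have hdet : (M.submatrix e e).det = M.det := Matrix.det_submatrix_equiv_self e M
  rw [← hdet, hblocks]
  exact fischer_blocks hsub

lemma subm_posSemidef {ι : Type} [Fintype ι] [DecidableEq ι] {M : Matrix ι ι ℂ}
    (hM : M.PosSemidef) (I : Finset ι) : (subm M I).PosSemidef :=
  hM.submatrix (Subtype.val : I → ι)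

lemma subm_det_le {m l : ℕ}
    {A' : Matrix (Fin m) (Fin m) ℂ} {B : Matrix (Fin m) (Fin l) ℂ}
    {A'' : Matrix (Fin l) (Fin l) ℂ}
    (hA : (Matrix.fromBlocks A' B Bᴴ A'').PosSemidef)
    (I : Finset (Fin m ⊕ Fin l)) :
    (subm (Matrix.fromBlocks A' B Bᴴ A'') I).det
      ≤ (subm (Matrix.fromBlocks A' 0 0 A'') I).det := by
  set M := Matrix.fromBlocks A' B Bᴴ A'' with hM
  set N := Matrix.fromBlocks A' 0 0 A'' with hN
  set p : {x // x ∈ I} → Prop := fun i => (i : Fin m ⊕ Fin l).isLeft = true with hp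
  have h1 := fischer_pred (subm_posSemidef hA I) p
  have h2 : (subm N I).det = ((subm N I).toSquareBlockProp p).det *
      ((subm N I).toSquareBlockProp fun i => ¬ p i).det := by
    apply Matrix.twoBlockTriangular_det
    intro i hi j hj
    obtain ⟨a, ha⟩ := Sum.isRight_iff.mp (Sum.not_isLeft.mp hi)
    obtain ⟨b, hb⟩ := Sum.isLeft_iff.mp hj
    show N (↑i) (↑j) = 0
    rw [ha, hb]
    rfl
  have e1 : ((subm M I).toSquareBlockProp p) = ((subm N I).toSquareBlockProp p) := by
    ext i j
    obtain ⟨a, ha⟩ := Sum.isLeft_iff.mp i.2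
    obtain ⟨b, hb⟩ := Sum.isLeft_iff.mp j.2
    show M _ _ = N _ _
    rw [ha, hb]
    rfl
  have e2 : ((subm M I).toSquareBlockProp fun i => ¬ p i)
      = ((subm N I).toSquareBlockProp fun i => ¬ p i) := by
    ext i j
    obtain ⟨a, ha⟩ := Sum.isRight_iff.mp (Sum.not_isLeft.mp i.2)
    obtain ⟨b, hb⟩ := Sum.isRight_iff.mp (Sum.not_isLeft.mp j.2)
    show M _ _ = N _ _
    rw [ha, hb]
    rfl
  rw [h2, ← e1, ← e2]
  exact h1

end Stmt12Aux

open Stmt12Aux in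
/-- `det(A, k) ≤ det(D, k)` where `D` is obtained from the p.s.d. Hermitian block
matrix `A = [[A', B], [Bᴴ, A'']]` by zeroing the off-diagonal blocks. -/
theorem stmt12 (m l k : ℕ)
    (A' : Matrix (Fin m) (Fin m) ℂ) (B : Matrix (Fin m) (Fin l) ℂ)
    (A'' : Matrix (Fin l) (Fin l) ℂ)
    (hA : (Matrix.fromBlocks A' B Bᴴ A'').PosSemidef)
    (hD : (Matrix.fromBlocks A' 0 0 A'').PosSemidef) :
    (detPart (Matrix.fromBlocks A' B Bᴴ A'') k).re ≤
      (detPart (Matrix.fromBlocks A' 0 0 A'') k).re := by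
  unfold detPart
  rw [Complex.re_sum, Complex.re_sum]
  apply Finset.sum_le_sum
  intro f _
  have hprod : (∏ j, (subm (Matrix.fromBlocks A' B Bᴴ A'')
        (Finset.univ.filter fun i => f i = j)).det)
      ≤ ∏ j, (subm (Matrix.fromBlocks A' 0 0 A'')
        (Finset.univ.filter fun i => f i = j)).det := by
    apply Finset.prod_le_prod
    · exact fun j _ => psd_det_nonneg (subm_posSemidef hA _)
    · exact fun j _ => subm_det_le hA _
  exact (Complex.le_def.mp hprod).1
end

section
/- If A is a positive semi-definite Hermitian n×n matrix and α is a nonnegative integer, then per_α(A) ≥ 0 and (−1)^n per_{−α}(A) ≥ 0. -/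
open Finset Matrix
open scoped ComplexOrder

namespace Stmt17Aux

open Equiv

variable {n : ℕ}

lemma core (B : Matrix (Fin n) (Fin n) ℂ) (G : Finset (Perm (Fin n)))
    (h1 : (1 : Perm (Fin n)) ∈ G)
    (hmul : ∀ σ ∈ G, ∀ τ ∈ G, σ * τ ∈ G)
    (hinv : ∀ σ ∈ G, σ⁻¹ ∈ G)
    (ε : Perm (Fin n) → ℂ)
    (hεm : ∀ σ τ, ε (σ * τ) = ε σ * ε τ)
    (hεi : ∀ σ, ε σ⁻¹ = ε σ)
    (hεsq : ∀ σ, ε σ * ε σ = 1)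
    (hεr : ∀ σ, (starRingEnd ℂ) (ε σ) = ε σ) :
    0 ≤ (∑ π ∈ G, ε π * ∏ i, (Bᴴ * B) i (π i)).re := by
  classical
  set C : (Fin n → Fin n) → ℂ := fun k => ∏ i, (starRingEnd ℂ) (B (k i) i) with hC
  set S : (Fin n → Fin n) → ℂ := fun k => ∑ σ ∈ G, ε σ * ∏ i, B (k i) (σ i) with hS
  set T : ℂ := ∑ π ∈ G, ε π * ∏ i, (Bᴴ * B) i (π i) with hT
  -- Step 1
  have step1 : T = ∑ k : Fin n → Fin n, C k * S k := by
    rw [hT]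
    have expand : ∀ π : Perm (Fin n),
        (∏ i, (Bᴴ * B) i (π i)) = ∑ k : Fin n → Fin n,
          C k * ∏ i, B (k i) (π i) := by
      intro π
      have : ∀ i, (Bᴴ * B) i (π i) = ∑ r, (starRingEnd ℂ) (B r i) * B r (π i) := by
        intro i; simp [Matrix.mul_apply, Matrix.conjTranspose_apply]
      simp_rw [this]
      rw [Finset.prod_univ_sum]
      rw [Fintype.piFinset_univ]
      refine Finset.sum_congr rfl fun k _ => ?_
      rw [hC, Finset.prod_mul_distrib]
    simp_rw [expand, Finset.mul_sum]
    rw [Finset.sum_comm]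
    refine Finset.sum_congr rfl fun k _ => ?_
    rw [hS, Finset.mul_sum]
    exact Finset.sum_congr rfl fun π _ => by ring
  -- S shift
  have Sshift : ∀ τ ∈ G, ∀ k : Fin n → Fin n, S (k ∘ τ) = ε τ * S k := by
    intro τ hτ k
    rw [hS, Finset.mul_sum]
    refine Finset.sum_bij' (fun σ _ => σ * τ⁻¹) (fun σ _ => σ * τ)
      (fun σ hσ => hmul σ hσ τ⁻¹ (hinv τ hτ)) (fun σ hσ => hmul σ hσ τ hτ)
      (fun σ _ => by group) (fun σ _ => by group) ?_
    intro σ hσ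
    have h1' : ε σ = ε τ * ε (σ * τ⁻¹) := by
      rw [hεm, hεi]
      calc ε σ = ε σ * (ε τ * ε τ) := by rw [hεsq]; ring
        _ = ε τ * (ε σ * ε τ) := by ring
    rw [h1']
    have h2' : ∀ i, B ((k ∘ τ) i) (σ i) = B (k (τ i)) (σ i) := fun _ => rfl
    have h3' : (∏ i, B (k (τ i)) (σ i)) = ∏ i, B (k i) ((σ * τ⁻¹) i) := by
      rw [← Equiv.prod_comp τ (fun i => B (k i) ((σ * τ⁻¹) i))]
      refine Finset.prod_congr rfl fun i _ => ?_
      simp [Equiv.Perm.mul_apply]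
    simp_rw [h2']
    rw [h3']
    ring
  -- Step 2
  have step2 : ∀ τ ∈ G, T = ∑ k : Fin n → Fin n, ε τ * C (k ∘ τ) * S k := by
    intro τ hτ
    rw [step1]
    rw [← Equiv.sum_comp (Equiv.arrowCongr (τ.symm : Fin n ≃ Fin n) (Equiv.refl (Fin n)))
      (fun k => C k * S k)]
    refine Finset.sum_congr rfl fun k _ => ?_
    have he : (Equiv.arrowCongr (τ.symm : Fin n ≃ Fin n) (Equiv.refl (Fin n))) k = k ∘ τ := by
      funext i; simp [Equiv.arrowCongr]
    rw [he, Sshift τ hτ k]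
    ring
  -- Step 3
  have conjS : ∀ k : Fin n → Fin n, (∑ τ ∈ G, ε τ * C (k ∘ τ)) = (starRingEnd ℂ) (S k) := by
    intro k
    rw [hS, map_sum]
    refine Finset.sum_bij' (fun τ _ => τ⁻¹) (fun τ _ => τ⁻¹)
      (fun τ hτ => hinv τ hτ) (fun τ hτ => hinv τ hτ)
      (fun τ _ => inv_inv τ) (fun τ _ => inv_inv τ) ?_
    intro τ hτ
    show ε τ * C (k ∘ τ) = (starRingEnd ℂ) (ε τ⁻¹ * ∏ i, B (k i) (τ⁻¹ i))
    rw [_root_.map_mul, hεr, hεi, map_prod]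
    congr 1
    rw [hC]
    rw [← Equiv.prod_comp τ (fun i => (starRingEnd ℂ) (B (k i) (τ⁻¹ i)))]
    refine Finset.prod_congr rfl fun i _ => ?_
    simp
  have step3 : (G.card : ℂ) * T = ∑ k : Fin n → Fin n, (starRingEnd ℂ) (S k) * S k := by
    calc (G.card : ℂ) * T = ∑ τ ∈ G, T := by rw [Finset.sum_const, nsmul_eq_mul]
      _ = ∑ τ ∈ G, ∑ k : Fin n → Fin n, ε τ * C (k ∘ τ) * S k :=
          Finset.sum_congr rfl fun τ hτ => step2 τ hτ
      _ = ∑ k : Fin n → Fin n, ∑ τ ∈ G, ε τ * C (k ∘ τ) * S k := Finset.sum_comm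
      _ = ∑ k : Fin n → Fin n, (starRingEnd ℂ) (S k) * S k := by
          refine Finset.sum_congr rfl fun k _ => ?_
          rw [← conjS k, Finset.sum_mul]
  have hre : ((G.card : ℂ) * T).re = (G.card : ℝ) * T.re := by
    simp
  have hrhs : 0 ≤ (∑ k : Fin n → Fin n, (starRingEnd ℂ) (S k) * S k).re := by
    rw [Complex.re_sum]
    refine Finset.sum_nonneg fun k _ => ?_
    rw [← Complex.normSq_eq_conj_mul_self]
    simp [Complex.normSq_nonneg]
  have := step3 ▸ hrhs
  rw [hre] at this
  have hcard : (0 : ℝ) < G.card := by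
    exact_mod_cast Finset.card_pos.mpr ⟨1, h1⟩
  exact nonneg_of_mul_nonneg_right this hcard


lemma const_on_cycle {m : ℕ} (π : Perm (Fin n)) (f : Fin n → Fin m)
    (hf : ∀ i, f (π i) = f i) {i j : Fin n} (h : π.SameCycle i j) : f i = f j := by
  obtain ⟨z, hz⟩ := h
  have key : ∀ z : ℤ, f ((π ^ z) i) = f i := by
    intro z
    induction z using Int.induction_on with
    | zero => simp
    | succ k ih =>
        have : (π ^ ((k : ℤ) + 1)) i = π ((π ^ (k : ℤ)) i) := by
          rw [add_comm, _root_.zpow_add, zpow_one]; rfl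
        rw [this, hf, ih]
    | pred k ih =>
        have : (π ^ (-(k : ℤ) - 1)) i = π⁻¹ ((π ^ (-(k : ℤ))) i) := by
          rw [sub_eq_add_neg, add_comm, _root_.zpow_add, _root_.zpow_neg, zpow_one]; rfl
        rw [this, ← ih]
        conv_rhs => rw [show (π ^ (-(k:ℤ))) i = π (π⁻¹ ((π ^ (-(k:ℤ))) i)) by simp]
        rw [hf]
  rw [← hz, key]

lemma card_fiber (m : ℕ) (π : Perm (Fin n)) :
    (Finset.univ.filter fun f : Fin n → Fin m => ∀ i, f (π i) = f i).card = m ^ nCycles π := by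
  classical
  have hcard : (Finset.univ.filter fun f : Fin n → Fin m => ∀ i, f (π i) = f i).card
      = Fintype.card {f : Fin n → Fin m // ∀ i, f (π i) = f i} := by
    rw [Fintype.card_subtype]
  rw [hcard]
  have hne : ∀ c : {c : Perm (Fin n) // c ∈ π.cycleFactorsFinset}, c.1.support.Nonempty := by
    intro c
    exact (Equiv.Perm.mem_cycleFactorsFinset_iff.mp c.2).1.nonempty_support
  let E : {f : Fin n → Fin m // ∀ i, f (π i) = f i} ≃
      (({c : Perm (Fin n) // c ∈ π.cycleFactorsFinset} → Fin m) × ({i : Fin n // π i = i} → Fin m)) :=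
    { toFun := fun f => (fun c => f.1 (c.1.support.min' (hne c)), fun i => f.1 i.1)
      invFun := fun p =>
        ⟨fun i => if hi : π i = i then p.2 ⟨i, hi⟩
          else p.1 ⟨π.cycleOf i, Equiv.Perm.cycleOf_mem_cycleFactorsFinset_iff.mpr
            (Equiv.Perm.mem_support.mpr hi)⟩, by
          intro i
          by_cases hi : π i = i
          · simp only [hi]
          · have hpi : ¬ π (π i) = π i := fun h => hi (π.injective h)
            simp only [dif_neg hpi, dif_neg hi]
            exact congrArg p.1 (Subtype.ext (Equiv.Perm.cycleOf_self_apply π i))⟩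
      left_inv := by
        intro f
        apply Subtype.ext
        funext i
        show (if hi : π i = i then f.1 i else _) = f.1 i
        by_cases hi : π i = i
        · rw [dif_pos hi]
        · rw [dif_neg hi]
          refine (const_on_cycle π f.1 f.2 ?_).symm
          have hmem := Finset.min'_mem (π.cycleOf i).support
            ⟨i, Equiv.Perm.mem_support_cycleOf_iff.mpr
              ⟨Equiv.Perm.SameCycle.refl _ _, Equiv.Perm.mem_support.mpr hi⟩⟩
          exact (Equiv.Perm.mem_support_cycleOf_iff.mp hmem).1
      right_inv := by
        intro p
        refine Prod.ext ?_ ?_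
        · funext c
          simp only
          have hx := Finset.min'_mem c.1.support (hne c)
          have hpx : ¬ π (c.1.support.min' (hne c)) = c.1.support.min' (hne c) := by
            have := (Equiv.Perm.mem_cycleFactorsFinset_iff.mp c.2).2 _ hx
            rw [← this]
            exact Equiv.Perm.mem_support.mp hx
          rw [dif_neg hpx]
          exact congrArg p.1 (Subtype.ext (Equiv.Perm.cycle_is_cycleOf hx c.2).symm)
        · funext i
          simp only [dif_pos i.2] }
  rw [Fintype.card_congr E]
  rw [Fintype.card_prod, Fintype.card_fun, Fintype.card_fun, Fintype.card_fin, ← pow_add]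
  congr 1
  have h1 : Fintype.card {c : Perm (Fin n) // c ∈ π.cycleFactorsFinset}
      = π.cycleType.card := by
    rw [Fintype.card_coe]
    simp [Equiv.Perm.cycleType]
  have h2 : Fintype.card {i : Fin n // π i = i} = n - π.support.card := by
    rw [Fintype.card_subtype]
    have : (Finset.univ.filter fun i : Fin n => π i = i) = π.supportᶜ := by
      ext i; simp [Equiv.Perm.mem_support]
    rw [this, Finset.card_compl, Fintype.card_fin]
  rw [h1, h2, nCycles, Fintype.card_fin]


lemma sign_aux (π : Perm (Fin n)) :
    (-1 : ℂ) ^ n * (-1) ^ nCycles π = ((Equiv.Perm.sign π : ℤ) : ℂ) := by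
  have hs : π.support.card ≤ n := le_trans (Finset.card_le_univ _) (by simp)
  have h1 : n + nCycles π + π.support.card = 2 * n + π.cycleType.card := by
    have := Equiv.Perm.sum_cycleType π
    unfold nCycles
    simp only [Fintype.card_fin]
    omega
  have hcast : ((Equiv.Perm.sign π : ℤ) : ℂ)
      = (-1 : ℂ) ^ (π.support.card + π.cycleType.card) := by
    rw [Equiv.Perm.sign_of_cycleType, Equiv.Perm.sum_cycleType]
    push_cast
    simp
  rw [hcast, ← pow_add]
  have h2 : ((-1 : ℂ)) ^ (n + nCycles π) * ((-1) ^ π.support.card * (-1) ^ π.support.card)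
      = (-1) ^ (n + nCycles π) := by
    rw [← pow_add, Even.neg_one_pow ⟨π.support.card, rfl⟩, mul_one]
  rw [← h2, ← mul_assoc, ← pow_add, ← pow_add, h1]
  rw [show 2 * n + π.cycleType.card + π.support.card
      = (π.support.card + π.cycleType.card) + 2 * n by ring]
  rw [pow_add, Even.neg_one_pow ⟨n, two_mul n⟩, mul_one]

lemma swap_sum (m : ℕ) (ε : Perm (Fin n) → ℂ) (w : Perm (Fin n) → ℂ) :
    ∑ π : Perm (Fin n), ((m : ℂ) ^ nCycles π * ε π) * w π
      = ∑ f : Fin n → Fin m, ∑ π ∈ Finset.univ.filter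
          (fun π : Perm (Fin n) => ∀ i, f (π i) = f i), ε π * w π := by
  classical
  simp only [Finset.sum_filter]
  rw [Finset.sum_comm]
  refine Finset.sum_congr rfl fun π _ => ?_
  rw [← Finset.sum_filter, Finset.sum_const, card_fiber m π, nsmul_eq_mul]
  push_cast
  ring

lemma fiber_one {m : ℕ} (f : Fin n → Fin m) :
    (1 : Perm (Fin n)) ∈ Finset.univ.filter (fun π : Perm (Fin n) => ∀ i, f (π i) = f i) := by
  simp

lemma fiber_mul {m : ℕ} (f : Fin n → Fin m) :
    ∀ σ ∈ Finset.univ.filter (fun π : Perm (Fin n) => ∀ i, f (π i) = f i),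
    ∀ τ ∈ Finset.univ.filter (fun π : Perm (Fin n) => ∀ i, f (π i) = f i),
      σ * τ ∈ Finset.univ.filter (fun π : Perm (Fin n) => ∀ i, f (π i) = f i) := by
  intro σ hσ τ hτ
  simp only [Finset.mem_filter, Finset.mem_univ, true_and] at *
  exact fun i => (hσ (τ i)).trans (hτ i)

lemma fiber_inv {m : ℕ} (f : Fin n → Fin m) :
    ∀ σ ∈ Finset.univ.filter (fun π : Perm (Fin n) => ∀ i, f (π i) = f i),
      σ⁻¹ ∈ Finset.univ.filter (fun π : Perm (Fin n) => ∀ i, f (π i) = f i) := by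
  intro σ hσ
  simp only [Finset.mem_filter, Finset.mem_univ, true_and] at *
  intro i
  have h := hσ (σ⁻¹ i)
  rw [show σ (σ⁻¹ i) = i from σ.apply_symm_apply i] at h
  exact h.symm

end Stmt17Aux

/-- For p.s.d. Hermitian `A` and a nonnegative integer `α = m`,
`per_m A ≥ 0` and `(-1)^n per_{-m} A ≥ 0`. -/
theorem stmt17 (n m : ℕ) (A : Matrix (Fin n) (Fin n) ℂ) (hA : A.PosSemidef) :
    0 ≤ (aperm (m : ℂ) A).re ∧ 0 ≤ ((-1) ^ n * aperm (-(m : ℂ)) A).re := by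
  classical
  open Stmt17Aux in
  obtain ⟨B, hB⟩ : ∃ B : Matrix (Fin n) (Fin n) ℂ, A = Bᴴ * B := by
    open scoped MatrixOrder in exact CStarAlgebra.nonneg_iff_eq_star_mul_self.mp hA.nonneg
  subst hB
  constructor
  · have h1 : aperm (m : ℂ) (Bᴴ * B)
        = ∑ π : Equiv.Perm (Fin n), ((m : ℂ) ^ nCycles π * (fun _ => (1 : ℂ)) π)
            * ∏ i, (Bᴴ * B) i (π i) := by
      unfold aperm; refine Finset.sum_congr rfl fun π _ => by ring
    rw [h1, Stmt17Aux.swap_sum m (fun _ => (1 : ℂ)) (fun π => ∏ i, (Bᴴ * B) i (π i)),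
      Complex.re_sum]
    refine Finset.sum_nonneg fun f _ => ?_
    exact Stmt17Aux.core B _ (Stmt17Aux.fiber_one f) (Stmt17Aux.fiber_mul f)
      (Stmt17Aux.fiber_inv f) (fun _ => (1 : ℂ))
      (fun _ _ => (one_mul 1).symm) (fun _ => rfl) (fun _ => one_mul 1)
      (fun _ => map_one _)
  · have h2 : (-1 : ℂ) ^ n * aperm (-(m : ℂ)) (Bᴴ * B)
        = ∑ π : Equiv.Perm (Fin n),
            ((m : ℂ) ^ nCycles π * (fun π => ((Equiv.Perm.sign π : ℤ) : ℂ)) π)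
            * ∏ i, (Bᴴ * B) i (π i) := by
      unfold aperm
      rw [Finset.mul_sum]
      refine Finset.sum_congr rfl fun π _ => ?_
      have key : (-1 : ℂ) ^ n * (-(m : ℂ)) ^ nCycles π
          = (m : ℂ) ^ nCycles π * ((Equiv.Perm.sign π : ℤ) : ℂ) := by
        rw [neg_pow, ← Stmt17Aux.sign_aux π]
        ring
      rw [← mul_assoc, key]
    rw [h2, Stmt17Aux.swap_sum m (fun π => ((Equiv.Perm.sign π : ℤ) : ℂ))
      (fun π => ∏ i, (Bᴴ * B) i (π i)), Complex.re_sum]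
    refine Finset.sum_nonneg fun f _ => ?_
    refine Stmt17Aux.core B _ (Stmt17Aux.fiber_one f) (Stmt17Aux.fiber_mul f)
      (Stmt17Aux.fiber_inv f) (fun π => ((Equiv.Perm.sign π : ℤ) : ℂ)) ?_ ?_ ?_ ?_
    · intro σ τ
      show ((Equiv.Perm.sign (σ * τ) : ℤ) : ℂ) = _
      rw [Equiv.Perm.sign_mul]; push_cast; ring
    · intro σ
      show ((Equiv.Perm.sign σ⁻¹ : ℤ) : ℂ) = _
      rw [Equiv.Perm.sign_inv]
    · intro σ
      show ((Equiv.Perm.sign σ : ℤ) : ℂ) * _ = 1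
      rw [← Int.cast_mul, ← Units.val_mul, Int.units_mul_self]
      simp
    · intro σ; exact map_intCast (starRingEnd ℂ) _
end

section
/- Let λ and μ be partitions of n, where λ arises from μ by replacing two parts of μ by their sum, and let A be a positive semi-definite Hermitian n×n matrix. Define d(λ) as the average over set partitions (I_1,…,I_k) of {1,…,n} with |I_j| = λ_j of Π_j det(A[I_j]). Then d(λ) ≤ d(μ). -/
open Finset Matrix
open scoped ComplexOrder

lemma psd_det_nonneg {m : Type*} [Fintype m] [DecidableEq m] {M : Matrix m m ℂ}
    (hM : M.PosSemidef) : 0 ≤ M.det := by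
  rw [hM.1.det_eq_prod_eigenvalues]
  exact Finset.prod_nonneg fun i _ =>
    Complex.zero_le_real.mpr (hM.eigenvalues_nonneg i)

lemma one_le_det_one_add {m : Type*} [Fintype m] [DecidableEq m] {Q : Matrix m m ℂ}
    (hQ : Q.PosSemidef) : 1 ≤ (1 + Q).det := by
  have hherm := hQ.1
  set U : Matrix m m ℂ := (hherm.eigenvectorUnitary : Matrix m m ℂ) with hU
  have hUU : U * star U = 1 := (Matrix.mem_unitaryGroup_iff).mp hherm.eigenvectorUnitary.2
  set D : Matrix m m ℂ := diagonal (RCLike.ofReal ∘ hherm.eigenvalues) with hD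
  have key : 1 + Q = U * (1 + D) * star U := by
    rw [mul_add, add_mul, mul_one, hUU]
    congr 1
    rw [hD, hU]
    exact hherm.spectral_theorem
  have hdetD : (1:ℂ) ≤ (1 + D).det := by
    have h1 : (1 : Matrix m m ℂ) + D = diagonal (fun i => ((1 + hherm.eigenvalues i : ℝ) : ℂ)) := by
      rw [hD, ← Matrix.diagonal_one, Matrix.diagonal_add]
      congr 1
      funext i
      push_cast
      rfl
    rw [h1, Matrix.det_diagonal]
    have h2 : (∏ i, ((1 + hherm.eigenvalues i : ℝ) : ℂ))
        = (((∏ i, (1 + hherm.eigenvalues i) : ℝ)) : ℂ) := by push_cast; rfl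
    rw [h2, show (1:ℂ) = ((1:ℝ):ℂ) from rfl, Complex.real_le_real]
    calc (1:ℝ) = ∏ _i : m, 1 := by simp
      _ ≤ ∏ i, (1 + hherm.eigenvalues i) := by
          apply Finset.prod_le_prod (fun i _ => zero_le_one)
          intro i _
          have := hQ.eigenvalues_nonneg i
          linarith
  calc (1:ℂ) ≤ (1 + D).det := hdetD
    _ = U.det * (1 + D).det * (star U).det := by
        rw [mul_right_comm, ← Matrix.det_mul, hUU, Matrix.det_one, one_mul]
    _ = (1 + Q).det := by rw [key, Matrix.det_mul, Matrix.det_mul]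

open scoped MatrixOrder in
lemma det_le_det_add {m : Type*} [Fintype m] [DecidableEq m] {S P : Matrix m m ℂ}
    (hS : S.PosSemidef) (hP : P.PosSemidef) : S.det ≤ (S + P).det := by
  by_cases hd : S.det = 0
  · rw [hd]; exact psd_det_nonneg (hS.add hP)
  · set R := CFC.sqrt S with hRdef
    have hR : R.PosSemidef := by exact (CFC.sqrt_nonneg S).posSemidef
    have hRR : R * R = S := by exact CFC.sqrt_mul_sqrt_self S hS.nonneg
    have hdR : R.det ≠ 0 := by
      intro h
      apply hd
      rw [← hRR, Matrix.det_mul, h, mul_zero]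
    have hdRunit : IsUnit R.det := isUnit_iff_ne_zero.mpr hdR
    have hRH : Rᴴ = R := hR.1
    have hRinvH : (R⁻¹)ᴴ = R⁻¹ := by rw [Matrix.conjTranspose_nonsing_inv, hRH]
    set Q := R⁻¹ * P * R⁻¹ with hQdef
    have hQ : Q.PosSemidef := by
      have := hP.mul_mul_conjTranspose_same R⁻¹
      rwa [hRinvH] at this
    have key : S + P = R * (1 + Q) * R := by
      rw [mul_add, add_mul, mul_one, hRR]
      congr 1
      show P = R * (R⁻¹ * P * R⁻¹) * R
      simp only [← mul_assoc]
      rw [Matrix.mul_nonsing_inv _ hdRunit, one_mul, mul_assoc,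
        Matrix.nonsing_inv_mul _ hdRunit, mul_one]
    have hdet : (S + P).det = R.det * (1 + Q).det * R.det := by
      rw [key, Matrix.det_mul, Matrix.det_mul]
    have hSdet : S.det = R.det * 1 * R.det := by rw [mul_one, ← Matrix.det_mul, hRR]
    rw [hdet, hSdet]
    have hRdet_nonneg : 0 ≤ R.det := psd_det_nonneg hR
    have h1 : 1 ≤ (1 + Q).det := one_le_det_one_add hQ
    have := mul_le_mul_of_nonneg_left h1 hRdet_nonneg
    exact mul_le_mul_of_nonneg_right this hRdet_nonneg

lemma fischer_blocks {m m' : Type*} [Fintype m] [DecidableEq m] [Fintype m'] [DecidableEq m']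
    {M : Matrix (m ⊕ m') (m ⊕ m') ℂ} (hM : M.PosSemidef) :
    M.det ≤ M.toBlocks₁₁.det * M.toBlocks₂₂.det := by
  set A := M.toBlocks₁₁ with hA
  set B := M.toBlocks₁₂ with hB
  set D := M.toBlocks₂₂ with hD
  have hC : M.toBlocks₂₁ = Bᴴ := by
    have := hM.1
    rw [Matrix.IsHermitian] at this
    funext i j
    have := congrFun (congrFun this (Sum.inr i)) (Sum.inl j)
    simpa [Matrix.conjTranspose_apply, hB, Matrix.toBlocks₁₂, Matrix.toBlocks₂₁] using this.symm
  have hM' : M = Matrix.fromBlocks A B Bᴴ D := by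
    rw [← hC, hA, hB, hD, Matrix.fromBlocks_toBlocks]
  have hApsd : A.PosSemidef := by
    have := hM.submatrix (Sum.inl : m → m ⊕ m')
    exact this
  have hDpsd : D.PosSemidef := by
    have := hM.submatrix (Sum.inr : m' → m ⊕ m')
    exact this
  by_cases hd : D.det = 0
  · -- M is singular
    obtain ⟨x, hx, hDx⟩ := (Matrix.exists_mulVec_eq_zero_iff).mpr hd
    have hv : (Sum.elim 0 x : m ⊕ m' → ℂ) ≠ 0 := by
      intro h
      apply hx
      funext i
      exact congrFun h (Sum.inr i)
    have hdot : star (Sum.elim 0 x) ⬝ᵥ (M *ᵥ Sum.elim 0 x) = 0 := by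
      rw [hM', Matrix.fromBlocks_mulVec]
      simp [dotProduct, hDx]
    have hMv : M *ᵥ Sum.elim 0 x = 0 := (hM.dotProduct_mulVec_zero_iff _).mp hdot
    have hMdet : M.det = 0 := Matrix.exists_mulVec_eq_zero_iff.mp ⟨_, hv, hMv⟩
    rw [hMdet, hd, mul_zero]
  · have hdUnit : IsUnit D.det := isUnit_iff_ne_zero.mpr hd
    haveI : Invertible D := D.invertibleOfIsUnitDet hdUnit
    have hDpd : D.PosDef := hDpsd.posDef_iff_det_ne_zero.mpr hd
    have hSchur : (A - B * D⁻¹ * Bᴴ).PosSemidef :=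
      (Matrix.PosDef.fromBlocks₂₂ A B hDpd).mp (hM' ▸ hM)
    have hBDB : (B * D⁻¹ * Bᴴ).PosSemidef := hDpsd.inv.mul_mul_conjTranspose_same B
    have hdetM : M.det = D.det * (A - B * D⁻¹ * Bᴴ).det := by
      rw [hM', Matrix.det_fromBlocks₂₂, Matrix.invOf_eq_nonsing_inv]
    have hle : (A - B * D⁻¹ * Bᴴ).det ≤ A.det := by
      have := det_le_det_add hSchur hBDB
      rwa [sub_add_cancel] at this
    rw [hdetM, mul_comm A.det D.det]
    exact mul_le_mul_of_nonneg_left hle (psd_det_nonneg hDpsd)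

lemma subm_psd {n : ℕ} {A : Matrix (Fin n) (Fin n) ℂ} (hA : A.PosSemidef) (I : Finset (Fin n)) :
    (subm A I).PosSemidef :=
  hA.submatrix (Subtype.val : I → Fin n)

lemma fischer_subm {n : ℕ} {A : Matrix (Fin n) (Fin n) ℂ} (hA : A.PosSemidef)
    (I J : Finset (Fin n)) (hIJ : Disjoint I J) :
    (subm A (I ∪ J)).det ≤ (subm A I).det * (subm A J).det := by
  classical
  set g : ↥I ⊕ ↥J → Fin n := Sum.elim (fun i => (i : Fin n)) (fun j => (j : Fin n)) with hg
  set N : Matrix (↥I ⊕ ↥J) (↥I ⊕ ↥J) ℂ := A.submatrix g g with hN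
  have hNpsd : N.PosSemidef := hA.submatrix g
  set f' : (↥I ⊕ ↥J) → ↥(I ∪ J) :=
    Sum.elim (fun i => ⟨(i : Fin n), Finset.mem_union_left _ i.2⟩)
      (fun j => (⟨(j : Fin n), Finset.mem_union_right _ j.2⟩ : ↥(I ∪ J))) with hf'
  have hbij : Function.Bijective f' := by
    constructor
    · rintro (i₁ | j₁) (i₂ | j₂) h <;>
        simp only [hf', Sum.elim_inl, Sum.elim_inr, Subtype.mk.injEq] at h
      · exact congrArg Sum.inl (Subtype.ext h)
      · exact absurd j₂.2 (Finset.disjoint_left.mp hIJ (by rw [← h]; exact i₁.2))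
      · exact absurd j₁.2 (Finset.disjoint_left.mp hIJ (by rw [h]; exact i₂.2))
      · exact congrArg Sum.inr (Subtype.ext h)
    · rintro ⟨x, hx⟩
      rcases Finset.mem_union.mp hx with h | h
      · exact ⟨Sum.inl ⟨x, h⟩, rfl⟩
      · exact ⟨Sum.inr ⟨x, h⟩, rfl⟩
  set e : (↥I ⊕ ↥J) ≃ ↥(I ∪ J) := Equiv.ofBijective f' hbij with he
  have hdet : N.det = (subm A (I ∪ J)).det := by
    have : N = (subm A (I ∪ J)).submatrix e e := by
      funext x y
      cases x <;> cases y <;> rfl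
    rw [this, Matrix.det_submatrix_equiv_self]
  have h11 : N.toBlocks₁₁ = subm A I := rfl
  have h22 : N.toBlocks₂₂ = subm A J := rfl
  calc (subm A (I ∪ J)).det = N.det := hdet.symm
    _ ≤ N.toBlocks₁₁.det * N.toBlocks₂₂.det := fischer_blocks hNpsd
    _ = (subm A I).det * (subm A J).det := by rw [h11, h22]


/-! ### Combinatorial helpers -/

/-- The fiber of `f` over `j` as a finset. -/
def fiber {n m : ℕ} (f : Fin n → Fin m) (j : Fin m) : Finset (Fin n) :=
  Finset.univ.filter fun i => f i = j

lemma fiber_def {n m : ℕ} (f : Fin n → Fin m) (j : Fin m) :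
    fiber f j = Finset.univ.filter (fun i => f i = j) := rfl

/-- Merge the two last values. -/
def mergeF {n k : ℕ} (g : Fin n → Fin (k+2)) : Fin n → Fin (k+1) :=
  fun i => ⟨min (g i).1 k, by omega⟩

/-- Split the last value according to a subset `T`. -/
def splitF {n k : ℕ} (f : Fin n → Fin (k+1)) (T : Finset (Fin n)) : Fin n → Fin (k+2) :=
  fun i => if h : (f i).1 < k then ⟨(f i).1, by omega⟩
    else if i ∈ T then ⟨k, by omega⟩ else ⟨k+1, by omega⟩

lemma fiber_splitF_low {n k : ℕ} (f : Fin n → Fin (k+1)) (T : Finset (Fin n)) (j : Fin k) :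
    fiber (splitF f T) (j.castSucc.castSucc) = fiber f j.castSucc := by
  ext i
  have hj := j.isLt
  have hfi := (f i).isLt
  simp only [fiber, Finset.mem_filter, Finset.mem_univ, true_and]
  simp only [splitF]
  split_ifs with h1 h2 <;>
    simp only [Fin.ext_iff, Fin.coe_castSucc] <;> omega

lemma fiber_splitF_mid {n k : ℕ} (f : Fin n → Fin (k+1)) (T : Finset (Fin n))
    (hT : T ⊆ fiber f (Fin.last k)) :
    fiber (splitF f T) ((Fin.last k).castSucc) = T := by
  ext i
  have hfi := (f i).isLt
  simp only [fiber, Finset.mem_filter, Finset.mem_univ, true_and]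
  simp only [splitF]
  constructor
  · intro h
    split_ifs at h with h1 h2
    · exfalso; rw [Fin.ext_iff] at h; simp only [Fin.coe_castSucc, Fin.val_last] at h; omega
    · exact h2
    · exfalso; rw [Fin.ext_iff] at h; simp only [Fin.coe_castSucc, Fin.val_last] at h; omega
  · intro hiT
    have hfi' : f i = Fin.last k := by
      have := hT hiT
      simpa [fiber, Finset.mem_filter] using this
    rw [dif_neg (by rw [hfi']; simp), if_pos hiT]
    rw [Fin.ext_iff]; simp

lemma fiber_splitF_top {n k : ℕ} (f : Fin n → Fin (k+1)) (T : Finset (Fin n))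
    (hT : T ⊆ fiber f (Fin.last k)) :
    fiber (splitF f T) (Fin.last (k+1)) = fiber f (Fin.last k) \ T := by
  ext i
  have hfi := (f i).isLt
  simp only [fiber, Finset.mem_filter, Finset.mem_univ, true_and, Finset.mem_sdiff]
  simp only [splitF]
  split_ifs with h1 h2
  · constructor
    · intro h; exfalso; rw [Fin.ext_iff] at h; simp only [Fin.val_last] at h; omega
    · rintro ⟨h, -⟩; exfalso; rw [Fin.ext_iff] at h; simp only [Fin.val_last] at h; omega
  · constructor
    · intro h; exfalso; rw [Fin.ext_iff] at h; simp only [Fin.val_last] at h; omega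
    · rintro ⟨-, hnT⟩; exact absurd h2 hnT
  · constructor
    · intro _; refine ⟨?_, h2⟩; rw [Fin.ext_iff]; simp only [Fin.val_last]; omega
    · intro _; rw [Fin.ext_iff]; simp

lemma mergeF_splitF {n k : ℕ} (f : Fin n → Fin (k+1)) (T : Finset (Fin n)) :
    mergeF (splitF f T) = f := by
  funext i
  have hfi := (f i).isLt
  simp only [mergeF, splitF]
  split_ifs with h1 h2 <;> (rw [Fin.ext_iff]; simp only []; omega)

lemma splitF_mergeF {n k : ℕ} (g : Fin n → Fin (k+2)) :
    splitF (mergeF g) (fiber g ((Fin.last k).castSucc)) = g := by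
  funext i
  have hgi := (g i).isLt
  simp only [splitF]
  split_ifs with h1 h2
  · rw [Fin.ext_iff]; simp only [mergeF] at h1 ⊢; omega
  · have h2' : g i = (Fin.last k).castSucc := (Finset.mem_filter.mp h2).2
    rw [h2']; rw [Fin.ext_iff]; simp
  · have h2' : g i ≠ (Fin.last k).castSucc := by
      intro hc; exact h2 (Finset.mem_filter.mpr ⟨Finset.mem_univ _, hc⟩)
    have h2v : (g i).1 ≠ k := by
      intro hc; exact h2' (by rw [Fin.ext_iff]; simpa using hc)
    rw [Fin.ext_iff]; simp only [mergeF] at h1 ⊢; omega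

lemma fiber_mergeF_low {n k : ℕ} (g : Fin n → Fin (k+2)) (j : Fin k) :
    fiber (mergeF g) j.castSucc = fiber g (j.castSucc.castSucc) := by
  ext i
  have hj := j.isLt
  simp only [fiber, Finset.mem_filter, Finset.mem_univ, true_and, mergeF, Fin.ext_iff,
    Fin.coe_castSucc]
  omega

lemma fiber_mergeF_last {n k : ℕ} (g : Fin n → Fin (k+2)) :
    fiber (mergeF g) (Fin.last k)
      = fiber g ((Fin.last k).castSucc) ∪ fiber g (Fin.last (k+1)) := by
  ext i
  have := (g i).isLt
  simp only [fiber, Finset.mem_filter, Finset.mem_univ, true_and, Finset.mem_union, mergeF,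
    Fin.ext_iff, Fin.coe_castSucc, Fin.val_last]
  omega

lemma fiber_last_disj {n k : ℕ} (g : Fin n → Fin (k+2)) :
    Disjoint (fiber g ((Fin.last k).castSucc)) (fiber g (Fin.last (k+1))) := by
  rw [Finset.disjoint_left]
  intro i h1 h2
  have h1' := (Finset.mem_filter.mp h1).2
  have h2' := (Finset.mem_filter.mp h2).2
  rw [h1'] at h2'
  rw [Fin.ext_iff] at h2'
  simp only [Fin.coe_castSucc, Fin.val_last] at h2'
  omega

/-- If the partition `λ = (s₁, …, s_k, a + b)` of `n` arises from
`μ = (s₁, …, s_k, a, b)` by merging two parts, then for p.s.d. Hermitian `A`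
the averaged determinant satisfies `d(λ) ≤ d(μ)`. -/
theorem stmt19 (n k : ℕ) (s : Fin k → ℕ) (a b : ℕ) (ha : 1 ≤ a) (hb : 1 ≤ b)
    (hs : ∀ j, 1 ≤ s j) (hsum : (∑ j, s j) + a + b = n)
    (A : Matrix (Fin n) (Fin n) ℂ) (hA : A.PosSemidef) :
    avgDet A (Fin.snoc s (a + b)) ≤ avgDet A (Fin.snoc (Fin.snoc s a) b) := by
  classical
  set t : Fin (k+1) → ℕ := Fin.snoc s (a+b) with ht
  set u : Fin (k+2) → ℕ := Fin.snoc (Fin.snoc s a) b with hu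
  have ht_low : ∀ j : Fin k, t j.castSucc = s j := fun j => by rw [ht, Fin.snoc_castSucc]
  have ht_last : t (Fin.last k) = a + b := by rw [ht, Fin.snoc_last]
  have hu_low : ∀ j : Fin k, u (j.castSucc.castSucc) = s j := fun j => by
    rw [hu, Fin.snoc_castSucc, Fin.snoc_castSucc]
  have hu_mid : u ((Fin.last k).castSucc) = a := by rw [hu, Fin.snoc_castSucc, Fin.snoc_last]
  have hu_last : u (Fin.last (k+1)) = b := by rw [hu, Fin.snoc_last]
  set P1 : Finset (Fin n → Fin (k+1)) :=
    Finset.univ.filter (fun f => ∀ j, (Finset.univ.filter fun i => f i = j).card = t j) with hP1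
  set P2 : Finset (Fin n → Fin (k+2)) :=
    Finset.univ.filter (fun f => ∀ j, (Finset.univ.filter fun i => f i = j).card = u j) with hP2
  set F : (Fin n → Fin (k+1)) → ℂ := fun f => ∏ j, (subm A (fiber f j)).det with hF
  set G : (Fin n → Fin (k+2)) → ℂ := fun g => ∏ j, (subm A (fiber g j)).det with hG
  set C : ℕ := (a+b).choose a with hC
  -- fiber cardinalities for members
  have hmemP1 : ∀ f ∈ P1, ∀ j, (fiber f j).card = t j := by
    intro f hf j
    exact (Finset.mem_filter.mp hf).2 j
  have hmemP2 : ∀ g ∈ P2, ∀ j, (fiber g j).card = u j := by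
    intro g hg j
    exact (Finset.mem_filter.mp hg).2 j
  set Sig : Finset ((_ : Fin n → Fin (k+1)) × Finset (Fin n)) :=
    P1.sigma (fun f => (fiber f (Fin.last k)).powersetCard a) with hSig
  -- forward map membership
  have hsplit_mem : ∀ (p : (_ : Fin n → Fin (k+1)) × Finset (Fin n)), p ∈ Sig →
      splitF p.1 p.2 ∈ P2 := by
    rintro ⟨f, T⟩ hp
    rw [hSig, Finset.mem_sigma] at hp
    obtain ⟨hf, hT⟩ := hp
    obtain ⟨hTsub, hTcard⟩ := Finset.mem_powersetCard.mp hT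
    rw [hP2, Finset.mem_filter]
    refine ⟨Finset.mem_univ _, ?_⟩
    intro j
    rw [← fiber_def]
    refine Fin.lastCases ?_ (fun j' => ?_) j
    · rw [fiber_splitF_top f T hTsub, Finset.card_sdiff_of_subset hTsub, hmemP1 f hf, ht_last, hTcard,
        hu_last]
      omega
    · refine Fin.lastCases ?_ (fun j'' => ?_) j'
      · rw [fiber_splitF_mid f T hTsub, hTcard, hu_mid]
      · rw [fiber_splitF_low f T j'', hmemP1 f hf, ht_low, hu_low]
  -- backward map membership
  have hmerge_mem : ∀ g ∈ P2, mergeF g ∈ P1 := by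
    intro g hg
    rw [hP1, Finset.mem_filter]
    refine ⟨Finset.mem_univ _, ?_⟩
    intro j
    rw [← fiber_def]
    refine Fin.lastCases ?_ (fun j' => ?_) j
    · rw [fiber_mergeF_last g, Finset.card_union_of_disjoint (fiber_last_disj g),
        hmemP2 g hg, hmemP2 g hg, hu_mid, hu_last, ht_last]
    · rw [fiber_mergeF_low g j', hmemP2 g hg, hu_low, ht_low]
  have hT_mem : ∀ g ∈ P2, (⟨mergeF g, fiber g ((Fin.last k).castSucc)⟩ :
      (_ : Fin n → Fin (k+1)) × Finset (Fin n)) ∈ Sig := by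
    intro g hg
    rw [hSig, Finset.mem_sigma]
    refine ⟨hmerge_mem g hg, ?_⟩
    rw [Finset.mem_powersetCard]
    constructor
    · rw [fiber_mergeF_last g]
      exact Finset.subset_union_left
    · rw [hmemP2 g hg, hu_mid]
  -- the sum over P2 equals the sum over Sig
  have hsum : ∑ g ∈ P2, G g = ∑ p ∈ Sig, G (splitF p.1 p.2) := by
    refine Finset.sum_bij' (fun g _ => ⟨mergeF g, fiber g ((Fin.last k).castSucc)⟩)
      (fun p _ => splitF p.1 p.2) hT_mem hsplit_mem ?_ ?_ ?_
    · intro g hg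
      exact splitF_mergeF g
    · rintro ⟨f, T⟩ hp
      rw [hSig, Finset.mem_sigma] at hp
      obtain ⟨hf, hT⟩ := hp
      obtain ⟨hTsub, -⟩ := Finset.mem_powersetCard.mp hT
      have h1 : mergeF (splitF f T) = f := mergeF_splitF f T
      have h2 : fiber (splitF f T) ((Fin.last k).castSucc) = T := fiber_splitF_mid f T hTsub
      exact Sigma.ext h1 (heq_of_eq h2)
    · intro g hg
      rw [splitF_mergeF g]
  have hcard : P2.card = Sig.card := by
    refine Finset.card_bij' (fun g _ => ⟨mergeF g, fiber g ((Fin.last k).castSucc)⟩)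
      (fun p _ => splitF p.1 p.2) hT_mem hsplit_mem ?_ ?_
    · intro g hg
      exact splitF_mergeF g
    · rintro ⟨f, T⟩ hp
      rw [hSig, Finset.mem_sigma] at hp
      obtain ⟨hf, hT⟩ := hp
      obtain ⟨hTsub, -⟩ := Finset.mem_powersetCard.mp hT
      have h1 : mergeF (splitF f T) = f := mergeF_splitF f T
      have h2 : fiber (splitF f T) ((Fin.last k).castSucc) = T := fiber_splitF_mid f T hTsub
      exact Sigma.ext h1 (heq_of_eq h2)
  have hSigcard : Sig.card = P1.card * C := by
    rw [hSig, Finset.card_sigma]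
    rw [Finset.sum_congr rfl (fun f hf => by
      rw [Finset.card_powersetCard, hmemP1 f hf, ht_last, ← hC])]
    rw [Finset.sum_const, smul_eq_mul]
  -- pointwise Fischer bound
  have hpoint : ∀ p ∈ Sig, F p.1 ≤ G (splitF p.1 p.2) := by
    rintro ⟨f, T⟩ hp
    rw [hSig, Finset.mem_sigma] at hp
    obtain ⟨hf, hT⟩ := hp
    obtain ⟨hTsub, hTcard⟩ := Finset.mem_powersetCard.mp hT
    have hGsplit : G (splitF f T) =
        (∏ j : Fin k, (subm A (fiber f j.castSucc)).det) * (subm A T).det *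
          (subm A (fiber f (Fin.last k) \ T)).det := by
      show (∏ j : Fin (k+2), (subm A (fiber (splitF f T) j)).det) = _
      rw [Fin.prod_univ_castSucc (fun j : Fin (k+2) => (subm A (fiber (splitF f T) j)).det)]
      rw [Fin.prod_univ_castSucc
        (fun j : Fin (k+1) => (subm A (fiber (splitF f T) j.castSucc)).det)]
      rw [fiber_splitF_top f T hTsub, fiber_splitF_mid f T hTsub]
      congr 2
      · exact Finset.prod_congr rfl fun j _ => by rw [fiber_splitF_low f T j]
    have hFf : F f = (∏ j : Fin k, (subm A (fiber f j.castSucc)).det) *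
        (subm A (fiber f (Fin.last k))).det := by
      show (∏ j : Fin (k+1), (subm A (fiber f j)).det) = _
      exact Fin.prod_univ_castSucc (fun j : Fin (k+1) => (subm A (fiber f j)).det)
    have hfischer : (subm A (fiber f (Fin.last k))).det ≤
        (subm A T).det * (subm A (fiber f (Fin.last k) \ T)).det := by
      have := fischer_subm hA T (fiber f (Fin.last k) \ T) Finset.disjoint_sdiff
      rwa [Finset.union_sdiff_of_subset hTsub] at this
    have hW : (0:ℂ) ≤ ∏ j : Fin k, (subm A (fiber f j.castSucc)).det :=
      Finset.prod_nonneg fun j _ => psd_det_nonneg (subm_psd hA _)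
    rw [hGsplit, hFf, mul_assoc]
    exact mul_le_mul_of_nonneg_left hfischer hW
  -- sum inequality in ℂ
  have hsum_le : (C : ℂ) * ∑ f ∈ P1, F f ≤ ∑ g ∈ P2, G g := by
    rw [hsum]
    have h1 : ∑ p ∈ Sig, F p.1 ≤ ∑ p ∈ Sig, G (splitF p.1 p.2) :=
      Finset.sum_le_sum hpoint
    have h2 : ∑ p ∈ Sig, F p.1 = (C : ℂ) * ∑ f ∈ P1, F f := by
      rw [hSig, Finset.sum_sigma]
      rw [Finset.mul_sum]
      refine Finset.sum_congr rfl fun f hf => ?_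
      have hconst : ∀ x ∈ (fiber f (Fin.last k)).powersetCard a,
          F (⟨f, x⟩ : (_ : Fin n → Fin (k+1)) × Finset (Fin n)).fst = F f := fun _ _ => rfl
      rw [Finset.sum_congr rfl hconst, Finset.sum_const, Finset.card_powersetCard,
        hmemP1 f hf, ht_last, ← hC, nsmul_eq_mul]
    rw [← h2]
    exact h1
  -- pass to real parts
  have hre : (C : ℝ) * ∑ f ∈ P1, (F f).re ≤ ∑ g ∈ P2, (G g).re := by
    have h := (Complex.le_def.mp hsum_le).1
    rw [Complex.mul_re] at h
    simp only [Complex.natCast_re, Complex.natCast_im, zero_mul, sub_zero] at h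
    rw [Complex.re_sum, Complex.re_sum] at h
    exact h
  -- unfold avgDet
  rw [avgDet, avgDet]
  rw [← hP1, ← hP2]
  have hsum1 : ∀ f : Fin n → Fin (k+1),
      (∏ j, (subm A (Finset.univ.filter fun i => f i = j)).det).re = (F f).re := fun f => rfl
  have hsum2 : ∀ g : Fin n → Fin (k+2),
      (∏ j, (subm A (Finset.univ.filter fun i => g i = j)).det).re = (G g).re := fun g => rfl
  simp only [hsum1, hsum2]
  by_cases hN : P1.card = 0
  · have hP1e : P1 = ∅ := Finset.card_eq_zero.mp hN
    have hP2e : P2 = ∅ := Finset.card_eq_zero.mp (by rw [hcard, hSigcard, hN, zero_mul])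
    rw [hP1e, hP2e]
    simp
  · have hNpos : 0 < (P1.card : ℝ) := by
      have := Nat.pos_of_ne_zero hN
      exact_mod_cast this
    have hCpos : 0 < C := hC ▸ Nat.choose_pos (Nat.le_add_right a b)
    have hP2card : (P2.card : ℝ) = (P1.card : ℝ) * (C : ℝ) := by
      rw [hcard, hSigcard]
      push_cast
      ring
    rw [hP2card]
    have hNCpos : 0 < (P1.card : ℝ) * (C : ℝ) := by
      apply mul_pos hNpos
      exact_mod_cast hCpos
    rw [div_le_div_iff₀ hNpos hNCpos]
    calc (∑ f ∈ P1, (F f).re) * ((P1.card : ℝ) * (C : ℝ))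
        = ((C : ℝ) * ∑ f ∈ P1, (F f).re) * (P1.card : ℝ) := by ring
      _ ≤ (∑ g ∈ P2, (G g).re) * (P1.card : ℝ) :=
          mul_le_mul_of_nonneg_right hre (le_of_lt hNpos)
end
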